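/- arXiv:2403.06334 — 3 statements merged into one kernel-verified Lean document; each statement's English description precedes it below -/
import Mathlib

section
/- The logic L = S4.1 ∗ S4 + ◇₁□₂(◇₁p → □₁p) is Kripke complete: L equals the set of bimodal formulas valid in every Kripke 2-frame validating L; equivalently, for every bimodal formula A ∉ L there is a Kripke 2-frame F with F ⊨ L and F ⊭ A. -/
/- ============== Formulas ============== -/

/-- Unimodal formulas. -/
inductive MForm : Type
  | var : ℕ → MForm
  | bot : MForm
  | imp : MForm → MForm → MForm
  | box : MForm → MForm

namespace MForm
def neg (A : MForm) : MForm := A.imp .bot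
def dia (A : MForm) : MForm := (MForm.box A.neg).neg
def subst (σ : ℕ → MForm) : MForm → MForm
  | var n => σ n
  | bot => bot
  | imp A B => (subst σ A).imp (subst σ B)
  | box A => MForm.box (subst σ A)
end MForm

/-- Bimodal formulas (`box 0` is □₁ and `box 1` is □₂). -/
inductive BForm : Type
  | var : ℕ → BForm
  | bot : BForm
  | imp : BForm → BForm → BForm
  | box : Fin 2 → BForm → BForm

namespace BForm
def neg (A : BForm) : BForm := A.imp .bot
def dia (i : Fin 2) (A : BForm) : BForm := (BForm.box i A.neg).neg
def subst (σ : ℕ → BForm) : BForm → BForm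
  | var n => σ n
  | bot => bot
  | imp A B => (subst σ A).imp (subst σ B)
  | box i A => BForm.box i (subst σ A)
end BForm

/-- Translation of a unimodal formula into the bimodal language,
reading □ as □ᵢ. -/
def MForm.toB (i : Fin 2) : MForm → BForm
  | .var n => .var n
  | .bot => .bot
  | .imp A B => (MForm.toB i A).imp (MForm.toB i B)
  | .box A => BForm.box i (MForm.toB i A)

/- ============== Normal modal logics ============== -/

/-- Provability in the smallest normal unimodal logic containing the axioms `Ax`:
classical tautologies (via a Hilbert axiomatization), the normality axiom,
modus ponens, necessitation and uniform substitution. -/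
inductive MProv (Ax : Set MForm) : MForm → Prop
  | axm {A : MForm} : A ∈ Ax → MProv Ax A
  | pl1 {A B : MForm} : MProv Ax (A.imp (B.imp A))
  | pl2 {A B C : MForm} : MProv Ax ((A.imp (B.imp C)).imp ((A.imp B).imp (A.imp C)))
  | pl3 {A : MForm} : MProv Ax ((A.neg.neg).imp A)
  | kax {A B : MForm} : MProv Ax ((MForm.box (A.imp B)).imp ((MForm.box A).imp (MForm.box B)))
  | mp {A B : MForm} : MProv Ax (A.imp B) → MProv Ax A → MProv Ax B
  | nec {A : MForm} : MProv Ax A → MProv Ax (MForm.box A)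
  | subst {A : MForm} (σ : ℕ → MForm) : MProv Ax A → MProv Ax (A.subst σ)

/-- Provability in the smallest normal bimodal logic containing the axioms `Ax`. -/
inductive BProv (Ax : Set BForm) : BForm → Prop
  | axm {A : BForm} : A ∈ Ax → BProv Ax A
  | pl1 {A B : BForm} : BProv Ax (A.imp (B.imp A))
  | pl2 {A B C : BForm} : BProv Ax ((A.imp (B.imp C)).imp ((A.imp B).imp (A.imp C)))
  | pl3 {A : BForm} : BProv Ax ((A.neg.neg).imp A)
  | kax (i : Fin 2) {A B : BForm} :
      BProv Ax ((BForm.box i (A.imp B)).imp ((BForm.box i A).imp (BForm.box i B)))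
  | mp {A B : BForm} : BProv Ax (A.imp B) → BProv Ax A → BProv Ax B
  | nec (i : Fin 2) {A : BForm} : BProv Ax A → BProv Ax (BForm.box i A)
  | subst {A : BForm} (σ : ℕ → BForm) : BProv Ax A → BProv Ax (A.subst σ)

/-- The propositional letter p. -/
def pM : MForm := .var 0

/-- Axioms of S4 : □p→p and □p→□□p. -/
def S4Ax : Set MForm := {(MForm.box pM).imp pM, (MForm.box pM).imp (MForm.box (MForm.box pM))}

/-- The McKinsey axiom □◇p→◇□p. -/
def McKM : MForm := (MForm.box pM.dia).imp (MForm.box pM).dia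

/-- The logic S4. -/
def S4L : Set MForm := {A | MProv S4Ax A}

/-- The logic S4.1 = S4 + McKinsey. -/
def S41L : Set MForm := {A | MProv (S4Ax ∪ {McKM}) A}

/-- Axioms of the fusion S4.1 ∗ S4 : all theorems of S4.1 read with □₁ together
with all theorems of S4 read with □₂. -/
def FusionAx : Set BForm := (MForm.toB 0 '' S41L) ∪ (MForm.toB 1 '' S4L)

/-- The fusion S4.1 ∗ S4 (as a normal bimodal logic). -/
def FusionL : Set BForm := {A | BProv FusionAx A}

def pB : BForm := .var 0

/-- The formula ◇₁□₂(◇₁p → □₁p). -/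
def MKB : BForm := BForm.dia 0 (BForm.box 1 ((BForm.dia 0 pB).imp (BForm.box 0 pB)))

/-- The logic L = S4.1 ∗ S4 + ◇₁□₂(◇₁p → □₁p). -/
def LL : Set BForm := {A | BProv (FusionAx ∪ {MKB}) A}

/- ============== Kripke semantics ============== -/

/-- Truth of a bimodal formula at a point of a Kripke 2-frame `(W, R 0, R 1)`
under valuation `V`. -/
def BSat {W : Type} (R : Fin 2 → W → W → Prop) (V : ℕ → W → Prop) : W → BForm → Prop
  | x, .var n => V n x
  | _, .bot => False
  | x, .imp A B => BSat R V x A → BSat R V x B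
  | x, .box i A => ∀ y, R i x y → BSat R V y A

/-- Frame validity for bimodal formulas. -/
def BValid {W : Type} (R : Fin 2 → W → W → Prop) (A : BForm) : Prop :=
  ∀ (V : ℕ → W → Prop) (x : W), BSat R V x A

/-- Truth of a unimodal formula at a point of a Kripke frame. -/
def MKSat {W : Type} (R : W → W → Prop) (V : ℕ → W → Prop) : W → MForm → Prop
  | x, .var n => V n x
  | _, .bot => False
  | x, .imp A B => MKSat R V x A → MKSat R V x B
  | x, .box A => ∀ y, R x y → MKSat R V y A

/-- Frame validity for unimodal formulas. -/
def MKValid {W : Type} (R : W → W → Prop) (A : MForm) : Prop :=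
  ∀ (V : ℕ → W → Prop) (x : W), MKSat R V x A

/- ============== Topological semantics ============== -/

/-- Topological truth of a unimodal formula: □A holds at `x` iff some open
neighbourhood of `x` satisfies `A` everywhere. -/
def MTSat {X : Type} (t : TopologicalSpace X) (V : ℕ → X → Prop) : X → MForm → Prop
  | x, .var n => V n x
  | _, .bot => False
  | x, .imp A B => MTSat t V x A → MTSat t V x B
  | x, .box A => ∃ U : Set X, t.IsOpen U ∧ x ∈ U ∧ ∀ y ∈ U, MTSat t V y A

/-- Topological validity for unimodal formulas. -/
def MTValid {X : Type} (t : TopologicalSpace X) (A : MForm) : Prop :=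
  ∀ (V : ℕ → X → Prop) (x : X), MTSat t V x A

/-- Bitopological truth of a bimodal formula: □ᵢ is interpreted via the
topology `t i`. -/
def BTSat {X : Type} (t : Fin 2 → TopologicalSpace X) (V : ℕ → X → Prop) : X → BForm → Prop
  | x, .var n => V n x
  | _, .bot => False
  | x, .imp A B => BTSat t V x A → BTSat t V x B
  | x, .box i A => ∃ U : Set X, (t i).IsOpen U ∧ x ∈ U ∧ ∀ y ∈ U, BTSat t V y A

/-- Bitopological validity for bimodal formulas. -/
def BTValid {X : Type} (t : Fin 2 → TopologicalSpace X) (A : BForm) : Prop :=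
  ∀ (V : ℕ → X → Prop) (x : X), BTSat t V x A

/-- The horizontal topology on `X × Y`: generated by the base
`{U × {y} : U open in X, y ∈ Y}`. -/
def horiz {X Y : Type} (t : TopologicalSpace X) : TopologicalSpace (X × Y) :=
  TopologicalSpace.generateFrom
    {S | ∃ (U : Set X) (y : Y), t.IsOpen U ∧ S = U ×ˢ ({y} : Set Y)}

/-- The vertical topology on `X × Y`: generated by the base
`{{x} × U : x ∈ X, U open in Y}`. -/
def vert {X Y : Type} (t : TopologicalSpace Y) : TopologicalSpace (X × Y) :=
  TopologicalSpace.generateFrom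
    {S | ∃ (x : X) (U : Set Y), t.IsOpen U ∧ S = ({x} : Set X) ×ˢ U}

/-- The topological product `L₁ ×ₜ L₂` of two unimodal logics: the set of all
bimodal formulas valid in every bitopological product `𝔛₁ × 𝔛₂` of (nonempty)
topological spaces with `𝔛₁ ⊨ L₁` and `𝔛₂ ⊨ L₂`. -/
def TopProdLogic (L1 L2 : Set MForm) : Set BForm :=
  {A | ∀ (X Y : Type) (t1 : TopologicalSpace X) (t2 : TopologicalSpace Y),
      Nonempty X → Nonempty Y →
      (∀ B ∈ L1, MTValid t1 B) → (∀ B ∈ L2, MTValid t2 B) →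
      BTValid ![horiz t1, vert t2] A}

/-- The Alexandrov topology of a (reflexive transitive) relation `R`:
the topology with base `{R(x) : x ∈ W}`. -/
def alexandrov {W : Type} (R : W → W → Prop) : TopologicalSpace W :=
  TopologicalSpace.generateFrom {S | ∃ x, S = {t | R x t}}

/-- A space is weakly scattered if every nonempty open set contains an
isolated point. -/
def WeaklyScattered {X : Type} (t : TopologicalSpace X) : Prop :=
  ∀ U : Set X, t.IsOpen U → U.Nonempty → ∃ x ∈ U, t.IsOpen ({x} : Set X)

/-- p-morphism between Kripke 1-frames. -/
def IsPMorphism {W U : Type} (R : W → W → Prop) (S : U → U → Prop) (f : W → U) : Prop :=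
  Function.Surjective f ∧ (∀ x y, R x y → S (f x) (f y)) ∧
    (∀ x u, S (f x) u → ∃ y, R x y ∧ f y = u)

/-- p-morphism between Kripke 2-frames. -/
def IsPMorphism2 {W U : Type} (R1 R2 : W → W → Prop) (S1 S2 : U → U → Prop)
    (f : W → U) : Prop :=
  Function.Surjective f ∧
    (∀ x y, R1 x y → S1 (f x) (f y)) ∧ (∀ x u, S1 (f x) u → ∃ y, R1 x y ∧ f y = u) ∧
    (∀ x y, R2 x y → S2 (f x) (f y)) ∧ (∀ x u, S2 (f x) u → ∃ y, R2 x y ∧ f y = u)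

/- ============== The frames 𝕋₂,₂ and 𝕋₂,₂₊₂ ============== -/

/-- The four-letter alphabet {a₁,a₂,b₁,b₂}: `(false, i)` is the a-letter `aᵢ₊₁`
and `(true, i)` is the b-letter `bᵢ₊₁`. -/
abbrev Letter : Type := Bool × Fin 2

/-- `T₂,₂ = {a₁,a₂,b₁,b₂}*`. -/
abbrev T22 : Type := List Letter

/-- `T₂ = {1,2}*`. -/
abbrev T2W : Type := List (Fin 2)

/-- First relation of `𝕋₂,₂`: append a word over the a-letters. -/
def R1T (w w' : T22) : Prop := ∃ c : T22, (∀ l ∈ c, l.1 = false) ∧ w' = w ++ c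

/-- Second relation of `𝕋₂,₂`: append a word over the b-letters. -/
def R2T (w w' : T22) : Prop := ∃ d : T22, (∀ l ∈ d, l.1 = true) ∧ w' = w ++ d

/-- The carrier of `𝕋₂,₂₊₂` : `⟨a, root⟩` is encoded as `(a, none)` and
`⟨a, b⟩` with `b ∈ T₂` as `(a, some b)`. -/
abbrev W222 : Type := T22 × Option T2W

/-- Generators of `R₁′`. -/
def R1'gen : W222 → W222 → Prop := fun x y =>
  (∃ a a', R1T a a' ∧ x = (a, none) ∧ y = (a', none)) ∨
  (∃ a, x = (a, none) ∧ y = (a, some ([] : T2W)))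

/-- `R₁′`: smallest reflexive transitive relation containing the generators. -/
def R1' : W222 → W222 → Prop := Relation.ReflTransGen R1'gen

/-- Generators of `R₂′`. -/
def R2'gen : W222 → W222 → Prop := fun x y =>
  (∃ a a', R2T a a' ∧ x = (a, none) ∧ y = (a', none)) ∨
  (∃ a b b', b <+: b' ∧ x = (a, some b) ∧ y = (a, some b'))

/-- `R₂′`: smallest reflexive transitive relation containing the generators. -/
def R2' : W222 → W222 → Prop := Relation.ReflTransGen R2'gen

/- ============== Pseudo-infinite paths and the spaces 𝒴 and 𝔛 ============== -/

/-- Infinite sequences over {0,1,2}: `none` encodes 0 and `some i` encodes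
`i+1 ∈ {1,2}`. -/
abbrev Seq3 : Type := ℕ → Option (Fin 2)

/-- `W_ω`: pseudo-infinite paths, i.e. sequences with finitely many nonzero
entries. -/
def Wom : Type := {s : Seq3 // {k | s k ≠ none}.Finite}

/-- `st(s)`: the least `N` such that all entries from `N` on are zero. -/
noncomputable def stN {γ : Type} (s : ℕ → Option γ) : ℕ :=
  sInf {N | ∀ k, N ≤ k → s k = none}

/-- The first `k` entries of a sequence, as a finite word. -/
def takeSeq {γ : Type} (s : ℕ → Option γ) (k : ℕ) : List (Option γ) :=
  List.ofFn (fun i : Fin k => s i.1)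

/-- `f_F`: delete all zeros from a finite word. -/
def fF {γ : Type} (l : List (Option γ)) : List γ := l.filterMap id

/-- `f_ω`: delete the zeros from a pseudo-infinite path, producing a finite word. -/
noncomputable def squash {γ : Type} (s : ℕ → Option γ) : List γ := fF (takeSeq s (stN s))

/-- The basic set `U_k(α) = {β ∈ W_ω : α↾k = β↾k and f_F(α↾k) ⊑ f_ω(β)}`. -/
def Uset (α : Wom) (k : ℕ) : Set Wom :=
  {β | takeSeq β.1 k = takeSeq α.1 k ∧ fF (takeSeq α.1 k) <+: squash β.1}

/-- The topology `T_ω` on `W_ω` generated by the base `{U_k(α) : k > 0}`;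
`𝒴 = (W_ω, T_ω)`. -/
def Tom : TopologicalSpace Wom :=
  TopologicalSpace.generateFrom {S | ∃ α k, 0 < k ∧ S = Uset α k}

/-- The basic sets of the space `𝔛`:
`U′_k(α,0) = (U_k(α) × {0}) ∪ (U_k(α) × {n ≥ k})` and `U′_k(α,n) = {⟨α,n⟩}`
for `n ≥ 1`. -/
def U'set (α : Wom) (k n : ℕ) : Set (Wom × ℕ) :=
  if n = 0 then (Uset α k ×ˢ ({0} : Set ℕ)) ∪ (Uset α k ×ˢ {m : ℕ | k ≤ m})
  else {(α, n)}

/-- The topology of the space `𝔛 = (W_ω × ℕ, T)`. -/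
def TX : TopologicalSpace (Wom × ℕ) :=
  TopologicalSpace.generateFrom {S | ∃ α k n, S = U'set α k n}

/-- Interleaving of two paths: the sequence `a_{x₁} b_{y₁} a_{x₂} b_{y₂} …`
(with `a₀ = b₀ = 0`). -/
def interleave (α β : Seq3) : ℕ → Option Letter := fun n =>
  if n % 2 = 0 then (α (n / 2)).map (fun v => ((false, v) : Letter))
  else (β (n / 2)).map (fun v => ((true, v) : Letter))

/-- The map `g : W_ω × W_ω → T₂,₂` obtained by interleaving and deleting zeros. -/
noncomputable def gmap (α β : Seq3) : T22 := squash (interleave α β)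

/-- `g` as a map on pairs. -/
noncomputable def gPair : Wom × Wom → T22 := fun q => gmap q.1.1 q.2.1

/-- `s↾n · 0^ω`. -/
def truncSeq (s : Seq3) (n : ℕ) : Seq3 := fun k => if k < n then s k else none

/-- The tail `γ` of `s = s↾n · γ`. -/
def shiftSeq (s : Seq3) (n : ℕ) : Seq3 := fun k => s (n + k)

/-- The map `f : 𝔛 × 𝒴 → 𝕋₂,₂₊₂` :
`f(⟨α,0⟩,β) = ⟨g(α,β), root⟩` and for `n ≥ 1`,
`f(⟨α,n⟩,β) = ⟨g(α↾n·0^ω, β↾n·0^ω), f_ω(γ)⟩` where `β = β↾n·γ`. -/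
noncomputable def fXY : (Wom × ℕ) × Wom → W222 := fun q =>
  if q.1.2 = 0 then (gmap q.1.1.1 q.2.1, none)
  else (gmap (truncSeq q.1.1.1 q.1.2) (truncSeq q.2.1 q.1.2),
        some (squash (shiftSeq q.2.1 q.1.2)))

/-- An effective encoding of bimodal formulas by natural numbers. -/
def encodeB : BForm → ℕ
  | .var n => Nat.pair 0 n
  | .bot => Nat.pair 1 0
  | .imp A B => Nat.pair 2 (Nat.pair (encodeB A) (encodeB B))
  | .box i A => Nat.pair 3 (Nat.pair i.1 (encodeB A))

namespace KC

open BForm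

/-- The axiom set of the logic L. -/
def AxL : Set BForm := FusionAx ∪ {MKB}

/-- Provability in L. -/
def Prv (A : BForm) : Prop := BProv AxL A

/-- Conjunction. -/
def bAnd (A B : BForm) : BForm := (A.imp B.neg).neg

/-- Disjunction. -/
def bOr (A B : BForm) : BForm := A.neg.imp B

/-- Verum. -/
def bTop : BForm := BForm.neg .bot

/-- Conjunction of a list. -/
def conjL : List BForm → BForm
  | [] => bTop
  | A :: L => bAnd A (conjL L)

/-- Derivations from a finite list of hypotheses (modus ponens only). -/
inductive Hyp (Γ : List BForm) : BForm → Prop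
  | hyp {A : BForm} : A ∈ Γ → Hyp Γ A
  | thm {A : BForm} : Prv A → Hyp Γ A
  | mp {A B : BForm} : Hyp Γ (A.imp B) → Hyp Γ A → Hyp Γ B

theorem prv_imp_self (A : BForm) : Prv (A.imp A) := by
  have h1 : Prv (A.imp ((A.imp A).imp A)) := BProv.pl1
  have h2 : Prv ((A.imp ((A.imp A).imp A)).imp ((A.imp (A.imp A)).imp (A.imp A))) := BProv.pl2
  exact BProv.mp (BProv.mp h2 h1) BProv.pl1

theorem Hyp.weak {Γ Δ : List BForm} {A : BForm} (h : Hyp Γ A) (hs : ∀ B ∈ Γ, B ∈ Δ) :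
    Hyp Δ A := by
  induction h with
  | hyp h => exact Hyp.hyp (hs _ h)
  | thm h => exact Hyp.thm h
  | mp _ _ ih1 ih2 => exact Hyp.mp ih1 ih2

/-- Deduction theorem. -/
theorem Hyp.ded {Γ : List BForm} {A B : BForm} (h : Hyp (A :: Γ) B) : Hyp Γ (A.imp B) := by
  induction h with
  | @hyp C hC =>
    rcases List.mem_cons.1 hC with h | h
    · subst h; exact Hyp.thm (prv_imp_self _)
    · exact Hyp.mp (Hyp.thm BProv.pl1) (Hyp.hyp h)
  | thm h => exact Hyp.mp (Hyp.thm BProv.pl1) (Hyp.thm h)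
  | mp _ _ ih1 ih2 => exact Hyp.mp (Hyp.mp (Hyp.thm BProv.pl2) ih1) ih2

theorem prv_of_hyp {A : BForm} (h : Hyp [] A) : Prv A := by
  induction h with
  | hyp h => simp at h
  | thm h => exact h
  | mp _ _ ih1 ih2 => exact BProv.mp ih1 ih2

theorem hyp_dne {Γ : List BForm} {A : BForm} (h : Hyp Γ A.neg.neg) : Hyp Γ A :=
  Hyp.mp (Hyp.thm BProv.pl3) h

/-- `⊥ → A`. -/
theorem prv_botE (A : BForm) : Prv (BForm.bot.imp A) := by
  apply prv_of_hyp; apply Hyp.ded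
  apply hyp_dne
  apply Hyp.mp (Hyp.thm BProv.pl1) (Hyp.hyp (by simp))

theorem hyp_botE {Γ : List BForm} (A : BForm) (h : Hyp Γ .bot) : Hyp Γ A :=
  Hyp.mp (Hyp.thm (prv_botE A)) h

theorem prv_and_intro (A B : BForm) : Prv (A.imp (B.imp (bAnd A B))) := by
  apply prv_of_hyp; apply Hyp.ded; apply Hyp.ded; apply Hyp.ded
  have h1 : Hyp [A.imp B.neg, B, A] (A.imp B.neg) := Hyp.hyp (by simp)
  have h2 : Hyp [A.imp B.neg, B, A] A := Hyp.hyp (by simp)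
  have h3 : Hyp [A.imp B.neg, B, A] B := Hyp.hyp (by simp)
  exact Hyp.mp (Hyp.mp h1 h2) h3

theorem prv_and_left (A B : BForm) : Prv ((bAnd A B).imp A) := by
  apply prv_of_hyp; apply Hyp.ded
  apply hyp_dne; apply Hyp.ded
  have h1 : Hyp [A.neg, bAnd A B] (bAnd A B) := Hyp.hyp (by simp)
  apply Hyp.mp h1
  apply Hyp.ded
  have h2 : Hyp [A, A.neg, bAnd A B] A := Hyp.hyp (by simp)
  have h3 : Hyp [A, A.neg, bAnd A B] A.neg := Hyp.hyp (by simp)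
  exact hyp_botE _ (Hyp.mp h3 h2)

theorem prv_and_right (A B : BForm) : Prv ((bAnd A B).imp B) := by
  apply prv_of_hyp; apply Hyp.ded
  apply hyp_dne; apply Hyp.ded
  have h1 : Hyp [B.neg, bAnd A B] (bAnd A B) := Hyp.hyp (by simp)
  apply Hyp.mp h1
  apply Hyp.ded
  exact Hyp.hyp (by simp)

theorem hyp_andI {Γ : List BForm} {A B : BForm} (h1 : Hyp Γ A) (h2 : Hyp Γ B) :
    Hyp Γ (bAnd A B) := Hyp.mp (Hyp.mp (Hyp.thm (prv_and_intro A B)) h1) h2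

theorem hyp_andL {Γ : List BForm} {A B : BForm} (h : Hyp Γ (bAnd A B)) : Hyp Γ A :=
  Hyp.mp (Hyp.thm (prv_and_left A B)) h

theorem hyp_andR {Γ : List BForm} {A B : BForm} (h : Hyp Γ (bAnd A B)) : Hyp Γ B :=
  Hyp.mp (Hyp.thm (prv_and_right A B)) h

theorem prv_top : Prv bTop := by
  apply prv_of_hyp; exact Hyp.ded (Hyp.hyp (by simp))

theorem prv_orIL (A B : BForm) : Prv (A.imp (bOr A B)) := by
  apply prv_of_hyp; apply Hyp.ded; apply Hyp.ded
  have h1 : Hyp [A.neg, A] A.neg := Hyp.hyp (by simp)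
  have h2 : Hyp [A.neg, A] A := Hyp.hyp (by simp)
  exact hyp_botE _ (Hyp.mp h1 h2)

theorem prv_orIR (A B : BForm) : Prv (B.imp (bOr A B)) := by
  apply prv_of_hyp; apply Hyp.ded; apply Hyp.ded
  exact Hyp.hyp (by simp)

theorem hyp_orE {Γ : List BForm} {A B C : BForm} (h : Hyp Γ (bOr A B))
    (h1 : Hyp Γ (A.imp C)) (h2 : Hyp Γ (B.imp C)) : Hyp Γ C := by
  apply hyp_dne
  have hw : ∀ D, Hyp Γ D → Hyp (C.neg :: Γ) D := fun D hd => hd.weak (by intro B h; simp [h])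
  apply Hyp.ded
  have hnc : Hyp (C.neg :: Γ) C.neg := Hyp.hyp (by simp)
  have hna : Hyp (C.neg :: Γ) A.neg := by
    apply Hyp.ded
    have hw2 : ∀ D, Hyp (C.neg :: Γ) D → Hyp (A :: C.neg :: Γ) D :=
      fun D hd => hd.weak (by intro B h; simp [h])
    exact Hyp.mp (hw2 _ hnc) (Hyp.mp (hw2 _ (hw _ h1)) (Hyp.hyp (by simp)))
  exact Hyp.mp hnc (Hyp.mp (hw _ h2) (Hyp.mp (hw _ h) hna))

/-- Composition of implications. -/
theorem prv_syll {A B C : BForm} (h1 : Prv (A.imp B)) (h2 : Prv (B.imp C)) :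
    Prv (A.imp C) := by
  apply prv_of_hyp; apply Hyp.ded
  exact Hyp.mp (Hyp.thm h2) (Hyp.mp (Hyp.thm h1) (Hyp.hyp (by simp)))

/-! ### Axiom instances -/

theorem prv_subst {A : BForm} (σ : ℕ → BForm) (h : Prv A) : Prv (A.subst σ) :=
  BProv.subst σ h

theorem mem_S41L_T : (MForm.box pM).imp pM ∈ S41L :=
  MProv.axm (Or.inl (by left; rfl))

theorem mem_S41L_4 : (MForm.box pM).imp (MForm.box (MForm.box pM)) ∈ S41L :=
  MProv.axm (Or.inl (by right; rfl))

theorem mem_S41L_McK : McKM ∈ S41L := MProv.axm (Or.inr rfl)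

theorem mem_S4L_T : (MForm.box pM).imp pM ∈ S4L := MProv.axm (by left; rfl)

theorem mem_S4L_4 : (MForm.box pM).imp (MForm.box (MForm.box pM)) ∈ S4L :=
  MProv.axm (by right; rfl)

theorem prv_toB0 {B : MForm} (h : B ∈ S41L) : Prv (MForm.toB 0 B) :=
  BProv.axm (Or.inl (Or.inl ⟨B, h, rfl⟩))

theorem prv_toB1 {B : MForm} (h : B ∈ S4L) : Prv (MForm.toB 1 B) :=
  BProv.axm (Or.inl (Or.inr ⟨B, h, rfl⟩))

theorem axT (i : Fin 2) (A : BForm) : Prv ((BForm.box i A).imp A) := by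
  fin_cases i
  · exact prv_subst (fun _ => A) (prv_toB0 mem_S41L_T)
  · exact prv_subst (fun _ => A) (prv_toB1 mem_S4L_T)

theorem ax4 (i : Fin 2) (A : BForm) :
    Prv ((BForm.box i A).imp (BForm.box i (BForm.box i A))) := by
  fin_cases i
  · exact prv_subst (fun _ => A) (prv_toB0 mem_S41L_4)
  · exact prv_subst (fun _ => A) (prv_toB1 mem_S4L_4)

theorem axMcK (A : BForm) :
    Prv ((BForm.box 0 (BForm.dia 0 A)).imp (BForm.dia 0 (BForm.box 0 A))) :=
  prv_subst (fun _ => A) (prv_toB0 mem_S41L_McK)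

theorem axMKB (A : BForm) :
    Prv (BForm.dia 0 (BForm.box 1 ((BForm.dia 0 A).imp (BForm.box 0 A)))) :=
  prv_subst (fun _ => A) (BProv.axm (Or.inr rfl))

/-! ### Modal derived rules -/

theorem mono_box {i : Fin 2} {A B : BForm} (h : Prv (A.imp B)) :
    Prv ((BForm.box i A).imp (BForm.box i B)) :=
  BProv.mp (BProv.kax i) (BProv.nec i h)

theorem prv_contrapose {A B : BForm} (h : Prv (A.imp B)) : Prv (B.neg.imp A.neg) := by
  apply prv_of_hyp; apply Hyp.ded; apply Hyp.ded
  have h1 : Hyp [A, B.neg] A := Hyp.hyp (by simp)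
  have h2 : Hyp [A, B.neg] B.neg := Hyp.hyp (by simp)
  exact Hyp.mp h2 (Hyp.mp (Hyp.thm h) h1)

theorem mono_dia {i : Fin 2} {A B : BForm} (h : Prv (A.imp B)) :
    Prv ((BForm.dia i A).imp (BForm.dia i B)) :=
  prv_contrapose (mono_box (prv_contrapose h))

theorem box_and (i : Fin 2) (A B : BForm) :
    Prv ((bAnd (BForm.box i A) (BForm.box i B)).imp (BForm.box i (bAnd A B))) := by
  have h1 : Prv ((BForm.box i A).imp (BForm.box i (B.imp (bAnd A B)))) :=
    mono_box (prv_and_intro A B)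
  have h2 : Prv ((BForm.box i (B.imp (bAnd A B))).imp
      ((BForm.box i B).imp (BForm.box i (bAnd A B)))) := BProv.kax i
  apply prv_of_hyp; apply Hyp.ded
  have hN : Hyp [bAnd (BForm.box i A) (BForm.box i B)] (bAnd (BForm.box i A) (BForm.box i B)) :=
    Hyp.hyp (by simp)
  have hA : Hyp [bAnd (BForm.box i A) (BForm.box i B)] (BForm.box i A) := hyp_andL hN
  have hB : Hyp [bAnd (BForm.box i A) (BForm.box i B)] (BForm.box i B) := hyp_andR hN
  exact Hyp.mp (Hyp.mp (Hyp.thm h2) (Hyp.mp (Hyp.thm h1) hA)) hB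

theorem dia_and_box (i : Fin 2) (A B : BForm) :
    Prv ((bAnd (BForm.dia i A) (BForm.box i B)).imp (BForm.dia i (bAnd A B))) := by
  have htaut : Prv (B.imp ((bAnd A B).neg.imp A.neg)) := by
    apply prv_of_hyp; apply Hyp.ded; apply Hyp.ded; apply Hyp.ded
    have h1 : Hyp [A, (bAnd A B).neg, B] ((bAnd A B).neg) := Hyp.hyp (by simp)
    have h2 : Hyp [A, (bAnd A B).neg, B] A := Hyp.hyp (by simp)
    have h3 : Hyp [A, (bAnd A B).neg, B] B := Hyp.hyp (by simp)
    exact Hyp.mp h1 (hyp_andI h2 h3)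
  have h1 : Prv ((BForm.box i B).imp ((BForm.box i (bAnd A B).neg).imp (BForm.box i A.neg))) :=
    prv_syll (mono_box htaut) (BProv.kax i)
  apply prv_of_hyp; apply Hyp.ded
  set Γ := [bAnd (BForm.dia i A) (BForm.box i B)]
  have hN : Hyp Γ (bAnd (BForm.dia i A) (BForm.box i B)) := Hyp.hyp (by simp [Γ])
  have hA : Hyp Γ (BForm.dia i A) := hyp_andL hN
  have hB : Hyp Γ (BForm.box i B) := hyp_andR hN
  -- goal : dia i (bAnd A B) = (box i (bAnd A B).neg).imp bot
  show Hyp Γ ((BForm.box i (bAnd A B).neg).imp BForm.bot)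
  apply Hyp.ded
  have hw : ∀ D, Hyp Γ D → Hyp (BForm.box i (bAnd A B).neg :: Γ) D :=
    fun D hd => hd.weak (by intro E h; simp [h])
  have hbox : Hyp (BForm.box i (bAnd A B).neg :: Γ) (BForm.box i (bAnd A B).neg) :=
    Hyp.hyp (by simp)
  have : Hyp (BForm.box i (bAnd A B).neg :: Γ) (BForm.box i A.neg) :=
    Hyp.mp (Hyp.mp (Hyp.thm h1) (hw _ hB)) hbox
  exact Hyp.mp (hw _ hA) this

theorem prv_T_dia (i : Fin 2) (A : BForm) : Prv (A.imp (BForm.dia i A)) := by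
  apply prv_of_hyp; apply Hyp.ded
  show Hyp [A] ((BForm.box i A.neg).imp BForm.bot)
  apply Hyp.ded
  have h1 : Hyp [BForm.box i A.neg, A] (BForm.box i A.neg) := Hyp.hyp (by simp)
  have h2 : Hyp [BForm.box i A.neg, A] A := Hyp.hyp (by simp)
  exact Hyp.mp (Hyp.mp (Hyp.thm (axT i A.neg)) h1) h2

theorem dia_dia (i : Fin 2) (A : BForm) :
    Prv ((BForm.dia i (BForm.dia i A)).imp (BForm.dia i A)) := by
  have h4 : Prv ((BForm.box i A.neg).imp (BForm.box i (BForm.box i A.neg))) := ax4 i A.neg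
  -- dia i (dia i A) = ¬ box i ¬(dia i A); note (dia i A).neg ↔ box i A.neg is not literal;
  -- dia i (dia i A) = (box i ((box i A.neg).neg.imp bot) ... we work it out via monotonicity
  have hinner : Prv ((BForm.box i A.neg).imp ((BForm.dia i A).neg)) := by
    apply prv_of_hyp; apply Hyp.ded; apply Hyp.ded
    have h1 : Hyp [BForm.dia i A, BForm.box i A.neg] (BForm.dia i A) := Hyp.hyp (by simp)
    have h2 : Hyp [BForm.dia i A, BForm.box i A.neg] (BForm.box i A.neg) := Hyp.hyp (by simp)
    exact Hyp.mp h1 h2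
  have hmono : Prv ((BForm.box i (BForm.box i A.neg)).imp (BForm.box i (BForm.dia i A).neg)) :=
    mono_box hinner
  apply prv_of_hyp; apply Hyp.ded
  show Hyp [BForm.dia i (BForm.dia i A)] ((BForm.box i A.neg).imp BForm.bot)
  apply Hyp.ded
  have h1 : Hyp [BForm.box i A.neg, BForm.dia i (BForm.dia i A)] (BForm.box i A.neg) :=
    Hyp.hyp (by simp)
  have h2 : Hyp [BForm.box i A.neg, BForm.dia i (BForm.dia i A)] (BForm.dia i (BForm.dia i A)) :=
    Hyp.hyp (by simp)
  exact Hyp.mp h2 (Hyp.mp (Hyp.thm hmono) (Hyp.mp (Hyp.thm h4) h1))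

theorem dia_bot (i : Fin 2) : Prv ((BForm.dia i BForm.bot).imp BForm.bot) := by
  have h : Prv (BForm.box i BForm.bot.neg) := BProv.nec i (prv_imp_self _)
  apply prv_of_hyp; apply Hyp.ded
  have h1 : Hyp [BForm.dia i BForm.bot] (BForm.dia i BForm.bot) := Hyp.hyp (by simp)
  exact Hyp.mp h1 (Hyp.thm h)

/-! ### Conjunction-list lemmas -/

theorem conj_elim_mem {L : List BForm} {E : BForm} (h : E ∈ L) : Prv ((conjL L).imp E) := by
  induction L with
  | nil => simp at h
  | cons B L ih =>
    rcases List.mem_cons.1 h with h | h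
    · subst h; exact prv_and_left _ _
    · exact prv_syll (prv_and_right _ _) (ih h)

theorem conj_intro_all {L : List BForm} {N : BForm} (h : ∀ E ∈ L, Prv (N.imp E)) :
    Prv (N.imp (conjL L)) := by
  induction L with
  | nil =>
    apply prv_of_hyp; apply Hyp.ded; exact Hyp.thm prv_top
  | cons B L ih =>
    have hB := h B (by simp)
    have hL : Prv (N.imp (conjL L)) := ih fun E hE => h E (by simp [hE])
    apply prv_of_hyp; apply Hyp.ded
    have hN : Hyp [N] N := Hyp.hyp (by simp)
    exact hyp_andI (Hyp.mp (Hyp.thm hB) hN) (Hyp.mp (Hyp.thm hL) hN)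

theorem box_conj (i : Fin 2) (L : List BForm) :
    Prv ((conjL (L.map (BForm.box i))).imp (BForm.box i (conjL L))) := by
  induction L with
  | nil =>
    apply prv_of_hyp; apply Hyp.ded
    exact Hyp.thm (BProv.nec i prv_top)
  | cons B L ih =>
    show Prv ((bAnd (BForm.box i B) (conjL (L.map (BForm.box i)))).imp _)
    apply prv_of_hyp; apply Hyp.ded
    set N := bAnd (BForm.box i B) (conjL (L.map (BForm.box i)))
    have hN : Hyp [N] N := Hyp.hyp (by simp)
    have h1 : Hyp [N] (BForm.box i B) := hyp_andL hN
    have h2 : Hyp [N] (BForm.box i (conjL L)) := Hyp.mp (Hyp.thm ih) (hyp_andR hN)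
    exact Hyp.mp (Hyp.thm (box_and i B (conjL L))) (hyp_andI h1 h2)

theorem conj_map_mono {γ : Type} {L : List γ} {f g : γ → BForm}
    (h : ∀ D ∈ L, Prv ((f D).imp (g D))) :
    Prv ((conjL (L.map f)).imp (conjL (L.map g))) := by
  apply conj_intro_all
  intro E hE
  rcases List.mem_map.1 hE with ⟨D, hD, rfl⟩
  exact prv_syll (conj_elim_mem (List.mem_map_of_mem hD)) (h D hD)

/-! ### The □₁-erasing translation, subformulas -/

/-- Erase all occurrences of `□₁`. -/
def tau : BForm → BForm
  | .var n => .var n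
  | .bot => .bot
  | .imp A B => (tau A).imp (tau B)
  | .box i A => if i = 0 then tau A else .box i (tau A)

/-- Subformulas. -/
def subf : BForm → List BForm
  | .var n => [.var n]
  | .bot => [.bot]
  | .imp A B => .imp A B :: (subf A ++ subf B)
  | .box i A => .box i A :: subf A

theorem subf_self (C : BForm) : C ∈ subf C := by
  cases C <;> simp [subf]

/-- The collapse formula `◇₁D → □₁D`. -/
def phif (D : BForm) : BForm := (BForm.dia 0 D).imp (BForm.box 0 D)

def thSig (Sl : List BForm) : BForm := conjL (Sl.map phif)

def Coll (Sl : List BForm) : BForm := bAnd (thSig Sl) (BForm.box 1 (thSig Sl))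

/-! ### The McKinsey conjunction lemma -/

theorem prv_of_neg_imp {A : BForm} (h : Prv (A.neg.imp BForm.bot)) : Prv A :=
  BProv.mp BProv.pl3 h

theorem prv_dia_of {i : Fin 2} {A : BForm} (h : Prv A) : Prv (BForm.dia i A) :=
  BProv.mp (prv_T_dia i A) h

def decf (X : BForm) : BForm := bOr (BForm.box 0 X) (BForm.box 0 X.neg)

theorem prv_dia_dec (X : BForm) : Prv (BForm.dia 0 (decf X)) := by
  apply prv_of_neg_imp
  apply prv_of_hyp; apply Hyp.ded
  set G := BForm.dia 0 (decf X)
  have hnG : Hyp [G.neg] G.neg := Hyp.hyp (by simp)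
  have hbox : Hyp [G.neg] (BForm.box 0 (decf X).neg) := hyp_dne hnG
  have hn2d : Prv ((decf X).neg.imp (BForm.dia 0 X)) := by
    apply prv_of_hyp; apply Hyp.ded
    show Hyp _ ((BForm.box 0 X.neg).imp BForm.bot)
    apply Hyp.ded
    have hb : Hyp [BForm.box 0 X.neg, (decf X).neg] (BForm.box 0 X.neg) := Hyp.hyp (by simp)
    have hn : Hyp [BForm.box 0 X.neg, (decf X).neg] ((decf X).neg) := Hyp.hyp (by simp)
    exact Hyp.mp hn (Hyp.mp (Hyp.thm BProv.pl1) hb)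
  have hdd : Hyp [G.neg] (BForm.dia 0 (BForm.box 0 X)) :=
    Hyp.mp (Hyp.thm (axMcK X)) (Hyp.mp (Hyp.thm (mono_box hn2d)) hbox)
  have hn2b : Prv ((decf X).neg.imp (BForm.box 0 X).neg) := prv_contrapose (prv_orIL _ _)
  have hb2 : Hyp [G.neg] (BForm.box 0 (BForm.box 0 X).neg) :=
    Hyp.mp (Hyp.thm (mono_box hn2b)) hbox
  exact Hyp.mp hdd hb2

theorem dec_pers (X : BForm) : Prv ((decf X).imp (BForm.box 0 (decf X))) := by
  apply prv_of_hyp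
  have h1 : Hyp [] ((BForm.box 0 X).imp (BForm.box 0 (decf X))) :=
    Hyp.thm (prv_syll (ax4 0 X) (mono_box (prv_orIL _ _)))
  have h2 : Hyp [] ((BForm.box 0 X.neg).imp (BForm.box 0 (decf X))) :=
    Hyp.thm (prv_syll (ax4 0 X.neg) (mono_box (prv_orIR _ _)))
  apply Hyp.ded
  have ho : Hyp [decf X] (decf X) := Hyp.hyp (by simp)
  exact hyp_orE ho (h1.weak (by simp)) (h2.weak (by simp))

theorem prv_mckconj (Xs : List BForm) : Prv (BForm.dia 0 (conjL (Xs.map decf))) := by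
  induction Xs with
  | nil => exact prv_dia_of prv_top
  | cons X Xs ih =>
    set M := Xs.map decf with hM
    have pers : Prv ((conjL M).imp (BForm.box 0 (conjL M))) := by
      have h1 : Prv ((conjL M).imp (conjL (M.map (BForm.box 0)))) := by
        apply conj_intro_all
        intro E hE
        rcases List.mem_map.1 hE with ⟨F, hF, rfl⟩
        rcases List.mem_map.1 hF with ⟨X', _, rfl⟩
        exact prv_syll (conj_elim_mem hF) (dec_pers X')
      exact prv_syll h1 (box_conj 0 M)
    have step : Prv ((conjL M).imp (BForm.dia 0 (bAnd (decf X) (conjL M)))) := by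
      apply prv_of_hyp; apply Hyp.ded
      have hθ : Hyp [conjL M] (conjL M) := Hyp.hyp (by simp)
      have hb : Hyp [conjL M] (BForm.box 0 (conjL M)) := Hyp.mp (Hyp.thm pers) hθ
      have hd : Hyp [conjL M] (BForm.dia 0 (decf X)) := Hyp.thm (prv_dia_dec X)
      exact Hyp.mp (Hyp.thm (dia_and_box 0 _ _)) (hyp_andI hd hb)
    have : Prv ((BForm.dia 0 (conjL M)).imp (BForm.dia 0 (conjL ((X :: Xs).map decf)))) := by
      show Prv ((BForm.dia 0 (conjL M)).imp (BForm.dia 0 (bAnd (decf X) (conjL M))))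
      exact prv_syll (mono_dia step) (dia_dia 0 _)
    exact BProv.mp this ih

theorem prv_dia_Coll (Sl : List BForm) : Prv (BForm.dia 0 (Coll Sl)) := by
  have h0 := prv_mckconj (Sl.map (fun D => BForm.box 1 (phif D)))
  rw [List.map_map] at h0
  have h1 : Prv ((conjL (Sl.map (decf ∘ fun D => BForm.box 1 (phif D)))).imp
      (conjL (Sl.map (fun D => BForm.box 1 (phif D))))) := by
    apply conj_map_mono
    intro D _
    show Prv ((decf (BForm.box 1 (phif D))).imp (BForm.box 1 (phif D)))
    apply prv_of_hyp; apply Hyp.ded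
    have ho : Hyp [decf (BForm.box 1 (phif D))] (decf (BForm.box 1 (phif D))) :=
      Hyp.hyp (by simp)
    apply hyp_orE ho
    · exact Hyp.thm (axT 0 _)
    · apply Hyp.ded
      have hmkb : Prv (BForm.dia 0 (BForm.box 1 (phif D))) := axMKB D
      have hb : Hyp [BForm.box 0 (BForm.box 1 (phif D)).neg, decf (BForm.box 1 (phif D))]
          (BForm.box 0 (BForm.box 1 (phif D)).neg) := Hyp.hyp (by simp)
      exact hyp_botE _ (Hyp.mp (Hyp.thm hmkb) hb)
  have h2 : Prv ((conjL (Sl.map (fun D => BForm.box 1 (phif D)))).imp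
      (BForm.box 1 (thSig Sl))) := by
    have : Sl.map (fun D => BForm.box 1 (phif D)) = (Sl.map phif).map (BForm.box 1) := by
      rw [List.map_map]; rfl
    rw [this]
    exact box_conj 1 _
  have h3 : Prv ((BForm.box 1 (thSig Sl)).imp (Coll Sl)) := by
    apply prv_of_hyp; apply Hyp.ded
    have hb : Hyp [BForm.box 1 (thSig Sl)] (BForm.box 1 (thSig Sl)) := Hyp.hyp (by simp)
    exact hyp_andI (Hyp.mp (Hyp.thm (axT 1 _)) hb) hb
  exact BProv.mp (mono_dia (prv_syll h1 (prv_syll h2 h3))) h0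

/-! ### The collapse lemma (Lemma A) -/

theorem coll_phif {Sl : List BForm} {D : BForm} (hD : D ∈ Sl) :
    Prv ((Coll Sl).imp (phif D)) :=
  prv_syll (prv_and_left _ _) (conj_elim_mem (List.mem_map_of_mem hD))

theorem coll_box1 (Sl : List BForm) : Prv ((Coll Sl).imp (BForm.box 1 (Coll Sl))) := by
  apply prv_of_hyp; apply Hyp.ded
  have hc : Hyp [Coll Sl] (Coll Sl) := Hyp.hyp (by simp)
  have hb : Hyp [Coll Sl] (BForm.box 1 (thSig Sl)) := hyp_andR hc
  have hbb : Hyp [Coll Sl] (BForm.box 1 (BForm.box 1 (thSig Sl))) :=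
    Hyp.mp (Hyp.thm (ax4 1 _)) hb
  exact Hyp.mp (Hyp.thm (box_and 1 _ _)) (hyp_andI hb hbb)

theorem lemmaA (Sl : List BForm) :
    ∀ C : BForm, (∀ D, BForm.box 0 D ∈ subf C → D ∈ Sl) →
      Prv ((Coll Sl).imp (bAnd (C.imp (tau C)) ((tau C).imp C))) := by
  intro C
  induction C with
  | var n =>
    intro _
    apply prv_of_hyp; apply Hyp.ded
    exact hyp_andI (Hyp.thm (prv_imp_self _)) (Hyp.thm (prv_imp_self _))
  | bot =>
    intro _
    apply prv_of_hyp; apply Hyp.ded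
    exact hyp_andI (Hyp.thm (prv_imp_self _)) (Hyp.thm (prv_imp_self _))
  | imp A B ihA ihB =>
    intro hsub
    have hA := ihA fun D hD => hsub D
      (List.mem_cons.2 (Or.inr (List.mem_append_left _ hD)))
    have hB := ihB fun D hD => hsub D
      (List.mem_cons.2 (Or.inr (List.mem_append_right _ hD)))
    show Prv ((Coll Sl).imp (bAnd ((A.imp B).imp ((tau A).imp (tau B)))
      (((tau A).imp (tau B)).imp (A.imp B))))
    apply prv_of_hyp; apply Hyp.ded
    have hc : Hyp [Coll Sl] (Coll Sl) := Hyp.hyp (by simp)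
    have hpA : Hyp [Coll Sl] (bAnd (A.imp (tau A)) ((tau A).imp A)) := Hyp.mp (Hyp.thm hA) hc
    have hpB : Hyp [Coll Sl] (bAnd (B.imp (tau B)) ((tau B).imp B)) := Hyp.mp (Hyp.thm hB) hc
    apply hyp_andI
    · apply Hyp.ded; apply Hyp.ded
      have hw : ∀ D, Hyp [Coll Sl] D → Hyp [tau A, A.imp B, Coll Sl] D :=
        fun D hd => hd.weak (by intro E h; simp at h; simp [h])
      have h1 : Hyp [tau A, A.imp B, Coll Sl] (tau A) := Hyp.hyp (by simp)
      have h2 : Hyp [tau A, A.imp B, Coll Sl] (A.imp B) := Hyp.hyp (by simp)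
      have ha : Hyp [tau A, A.imp B, Coll Sl] A := Hyp.mp (hyp_andR (hw _ hpA)) h1
      exact Hyp.mp (hyp_andL (hw _ hpB)) (Hyp.mp h2 ha)
    · apply Hyp.ded; apply Hyp.ded
      have hw : ∀ D, Hyp [Coll Sl] D → Hyp [A, (tau A).imp (tau B), Coll Sl] D :=
        fun D hd => hd.weak (by intro E h; simp at h; simp [h])
      have h1 : Hyp [A, (tau A).imp (tau B), Coll Sl] A := Hyp.hyp (by simp)
      have h2 : Hyp [A, (tau A).imp (tau B), Coll Sl] ((tau A).imp (tau B)) := Hyp.hyp (by simp)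
      have hta : Hyp [A, (tau A).imp (tau B), Coll Sl] (tau A) := Hyp.mp (hyp_andL (hw _ hpA)) h1
      exact Hyp.mp (hyp_andR (hw _ hpB)) (Hyp.mp h2 hta)
  | box i C' ih =>
    intro hsub
    have hC' := ih fun D hD => hsub D (List.mem_cons.2 (Or.inr hD))
    have hi : i = 0 ∨ i = 1 := by
      rcases i with ⟨_ | _ | n, h⟩
      · left; rfl
      · right; rfl
      · omega
    rcases hi with rfl | rfl
    · -- box 0
      have hmem : C' ∈ Sl := hsub C' (subf_self _)
      have hφ : Prv ((Coll Sl).imp (phif C')) := coll_phif hmem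
      have htau : tau (BForm.box 0 C') = tau C' := by simp [tau]
      rw [htau]
      apply prv_of_hyp; apply Hyp.ded
      have hc : Hyp [Coll Sl] (Coll Sl) := Hyp.hyp (by simp)
      have hpC : Hyp [Coll Sl] (bAnd (C'.imp (tau C')) ((tau C').imp C')) :=
        Hyp.mp (Hyp.thm hC') hc
      have hphi : Hyp [Coll Sl] (phif C') := Hyp.mp (Hyp.thm hφ) hc
      apply hyp_andI
      · -- □₀C' → tau C'
        apply Hyp.ded
        have hw : ∀ D, Hyp [Coll Sl] D → Hyp [BForm.box 0 C', Coll Sl] D :=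
          fun D hd => hd.weak (by intro E h; simp at h; simp [h])
        have hb : Hyp [BForm.box 0 C', Coll Sl] (BForm.box 0 C') := Hyp.hyp (by simp)
        have hcc : Hyp [BForm.box 0 C', Coll Sl] C' := Hyp.mp (Hyp.thm (axT 0 C')) hb
        exact Hyp.mp (hyp_andL (hw _ hpC)) hcc
      · -- tau C' → □₀C'
        apply Hyp.ded
        have hw : ∀ D, Hyp [Coll Sl] D → Hyp [tau C', Coll Sl] D :=
          fun D hd => hd.weak (by intro E h; simp at h; simp [h])
        have ht : Hyp [tau C', Coll Sl] (tau C') := Hyp.hyp (by simp)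
        have hcc : Hyp [tau C', Coll Sl] C' := Hyp.mp (hyp_andR (hw _ hpC)) ht
        have hdia : Hyp [tau C', Coll Sl] (BForm.dia 0 C') :=
          Hyp.mp (Hyp.thm (prv_T_dia 0 C')) hcc
        exact Hyp.mp (hw _ hphi) hdia
    · -- box 1
      have htau : tau (BForm.box 1 C') = BForm.box 1 (tau C') := by simp [tau]
      rw [htau]
      have hbc : Prv ((Coll Sl).imp (BForm.box 1 (bAnd (C'.imp (tau C')) ((tau C').imp C')))) :=
        prv_syll (coll_box1 Sl) (mono_box hC')
      have h1 : Prv ((BForm.box 1 (bAnd (C'.imp (tau C')) ((tau C').imp C'))).imp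
          (BForm.box 1 (C'.imp (tau C')))) := mono_box (prv_and_left _ _)
      have h2 : Prv ((BForm.box 1 (bAnd (C'.imp (tau C')) ((tau C').imp C'))).imp
          (BForm.box 1 ((tau C').imp C'))) := mono_box (prv_and_right _ _)
      apply prv_of_hyp; apply Hyp.ded
      have hc : Hyp [Coll Sl] (Coll Sl) := Hyp.hyp (by simp)
      have hb : Hyp [Coll Sl] (BForm.box 1 (bAnd (C'.imp (tau C')) ((tau C').imp C'))) :=
        Hyp.mp (Hyp.thm hbc) hc
      apply hyp_andI
      · exact Hyp.mp (Hyp.thm (BProv.kax 1)) (Hyp.mp (Hyp.thm h1) hb)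
      · exact Hyp.mp (Hyp.thm (BProv.kax 1)) (Hyp.mp (Hyp.thm h2) hb)

/-! ### The key lemma -/

/-- Extraction of `□₀`-bodies. -/
def box0body : BForm → Option BForm
  | .box i D => if i = 0 then some D else none
  | _ => none

def sigOf (Cs : List BForm) : List BForm := (Cs.flatMap subf).filterMap box0body

theorem mem_sigOf {Cs : List BForm} {C D : BForm} (hC : C ∈ Cs)
    (hD : BForm.box 0 D ∈ subf C) : D ∈ sigOf Cs := by
  apply List.mem_filterMap.2
  refine ⟨BForm.box 0 D, List.mem_flatMap.2 ⟨C, hC, hD⟩, ?_⟩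
  simp [box0body]

theorem key2 (Bs Cs : List BForm) :
    Prv ((conjL ((Bs ++ Cs).map (BForm.box 0))).imp
      (BForm.dia 0 (bAnd (conjL Bs) (conjL (Cs.map tau))))) := by
  set Sl := sigOf Cs
  set BIG := bAnd (conjL Bs) (conjL (Cs.map tau))
  have hColl : Prv (BForm.dia 0 (Coll Sl)) := prv_dia_Coll Sl
  have hinner : Prv ((bAnd (Coll Sl) (conjL (Bs ++ Cs))).imp BIG) := by
    have hBs : Prv ((bAnd (Coll Sl) (conjL (Bs ++ Cs))).imp (conjL Bs)) := by
      apply conj_intro_all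
      intro E hE
      exact prv_syll (prv_and_right _ _) (conj_elim_mem (List.mem_append_left _ hE))
    have hCs : Prv ((bAnd (Coll Sl) (conjL (Bs ++ Cs))).imp (conjL (Cs.map tau))) := by
      apply conj_intro_all
      intro E hE
      rcases List.mem_map.1 hE with ⟨C, hC, rfl⟩
      have hL : Prv ((Coll Sl).imp (bAnd (C.imp (tau C)) ((tau C).imp C))) :=
        lemmaA Sl C fun D hD => mem_sigOf hC hD
      apply prv_of_hyp; apply Hyp.ded
      have hh : Hyp [bAnd (Coll Sl) (conjL (Bs ++ Cs))] (bAnd (Coll Sl) (conjL (Bs ++ Cs))) :=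
        Hyp.hyp (by simp)
      have hcol : Hyp [bAnd (Coll Sl) (conjL (Bs ++ Cs))] (Coll Sl) := hyp_andL hh
      have hC2 : Hyp [bAnd (Coll Sl) (conjL (Bs ++ Cs))] C :=
        Hyp.mp (Hyp.thm (conj_elim_mem (List.mem_append_right _ hC))) (hyp_andR hh)
      exact Hyp.mp (hyp_andL (Hyp.mp (Hyp.thm hL) hcol)) hC2
    apply prv_of_hyp; apply Hyp.ded
    have hh : Hyp [bAnd (Coll Sl) (conjL (Bs ++ Cs))] (bAnd (Coll Sl) (conjL (Bs ++ Cs))) :=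
      Hyp.hyp (by simp)
    exact hyp_andI (Hyp.mp (Hyp.thm hBs) hh) (Hyp.mp (Hyp.thm hCs) hh)
  apply prv_of_hyp; apply Hyp.ded
  have hh : Hyp [conjL ((Bs ++ Cs).map (BForm.box 0))] (conjL ((Bs ++ Cs).map (BForm.box 0))) :=
    Hyp.hyp (by simp)
  have hb : Hyp [conjL ((Bs ++ Cs).map (BForm.box 0))] (BForm.box 0 (conjL (Bs ++ Cs))) :=
    Hyp.mp (Hyp.thm (box_conj 0 _)) hh
  have hd : Hyp [conjL ((Bs ++ Cs).map (BForm.box 0))]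
      (BForm.dia 0 (bAnd (Coll Sl) (conjL (Bs ++ Cs)))) :=
    Hyp.mp (Hyp.thm (dia_and_box 0 _ _)) (hyp_andI (Hyp.thm hColl) hb)
  exact Hyp.mp (Hyp.thm (mono_dia hinner)) hd

/-! ### Deduction from sets, consistency, maximal consistent sets -/

/-- Deducibility from a set of assumptions. -/
def Ded (Γ : Set BForm) (A : BForm) : Prop :=
  ∃ L : List BForm, (∀ E ∈ L, E ∈ Γ) ∧ Prv ((conjL L).imp A)

/-- Consistency. -/
def Con (Γ : Set BForm) : Prop := ¬ Ded Γ BForm.bot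

/-- Maximal consistent sets. -/
def IsMCS (x : Set BForm) : Prop := Con x ∧ ∀ y, Con y → x ⊆ y → y = x

theorem prv_imp_of_prv {N A : BForm} (h : Prv A) : Prv (N.imp A) :=
  BProv.mp BProv.pl1 h

theorem ded_of_prv {Γ : Set BForm} {A : BForm} (h : Prv A) : Ded Γ A :=
  ⟨[], by simp, prv_imp_of_prv h⟩

theorem ded_mono {Γ Δ : Set BForm} {A : BForm} (h : Ded Γ A) (hs : Γ ⊆ Δ) : Ded Δ A := by
  obtain ⟨L, hL, hp⟩ := h
  exact ⟨L, fun E hE => hs (hL E hE), hp⟩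

theorem conj_append_left (L1 L2 : List BForm) : Prv ((conjL (L1 ++ L2)).imp (conjL L1)) :=
  conj_intro_all fun E hE => conj_elim_mem (List.mem_append_left _ hE)

theorem conj_append_right (L1 L2 : List BForm) : Prv ((conjL (L1 ++ L2)).imp (conjL L2)) :=
  conj_intro_all fun E hE => conj_elim_mem (List.mem_append_right _ hE)

theorem ded_mp {Γ : Set BForm} {A B : BForm} (h1 : Ded Γ (A.imp B)) (h2 : Ded Γ A) :
    Ded Γ B := by
  obtain ⟨L1, hL1, hp1⟩ := h1
  obtain ⟨L2, hL2, hp2⟩ := h2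
  refine ⟨L1 ++ L2, fun E hE => ?_, ?_⟩
  · rcases List.mem_append.1 hE with h | h
    · exact hL1 E h
    · exact hL2 E h
  · apply prv_of_hyp; apply Hyp.ded
    have hh : Hyp [conjL (L1 ++ L2)] (conjL (L1 ++ L2)) := Hyp.hyp (by simp)
    have c1 : Hyp [conjL (L1 ++ L2)] (A.imp B) :=
      Hyp.mp (Hyp.thm (prv_syll (conj_append_left L1 L2) hp1)) hh
    have c2 : Hyp [conjL (L1 ++ L2)] A :=
      Hyp.mp (Hyp.thm (prv_syll (conj_append_right L1 L2) hp2)) hh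
    exact Hyp.mp c1 c2

/-- Deduction theorem for `Ded`. -/
theorem ded_insert {Γ : Set BForm} {A B : BForm} (h : Ded (insert A Γ) B) :
    Ded Γ (A.imp B) := by
  obtain ⟨L, hL, hp⟩ := h
  have hsplit : ∃ L' : List BForm, (∀ E ∈ L', E ∈ Γ) ∧ ∀ E ∈ L, E = A ∨ E ∈ L' := by
    clear hp
    induction L with
    | nil => exact ⟨[], by simp, by simp⟩
    | cons E L ih =>
      obtain ⟨L', h1, h2⟩ := ih fun F hF => hL F (by simp [hF])
      rcases hL E (by simp) with h | h
      · exact ⟨L', h1, by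
          intro F hF
          rcases List.mem_cons.1 hF with rfl | hF
          · exact Or.inl h
          · exact h2 F hF⟩
      · exact ⟨E :: L', by
          intro F hF
          rcases List.mem_cons.1 hF with rfl | hF
          · exact h
          · exact h1 F hF, by
          intro F hF
          rcases List.mem_cons.1 hF with rfl | hF
          · exact Or.inr (by simp)
          · rcases h2 F hF with h | h
            · exact Or.inl h
            · exact Or.inr (by simp [h])⟩
  obtain ⟨L', h1, h2⟩ := hsplit
  refine ⟨L', h1, ?_⟩
  have hbig : Prv ((bAnd A (conjL L')).imp (conjL L)) := by
    apply conj_intro_all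
    intro E hE
    rcases h2 E hE with rfl | h
    · exact prv_and_left _ _
    · exact prv_syll (prv_and_right _ _) (conj_elim_mem h)
  apply prv_of_hyp; apply Hyp.ded; apply Hyp.ded
  have ha : Hyp [A, conjL L'] A := Hyp.hyp (by simp)
  have hl : Hyp [A, conjL L'] (conjL L') := Hyp.hyp (by simp)
  exact Hyp.mp (Hyp.thm (prv_syll hbig hp)) (hyp_andI ha hl)

/-- Lindenbaum lemma. -/
theorem lindenbaum {Γ : Set BForm} (h : Con Γ) : ∃ x, Γ ⊆ x ∧ IsMCS x := by
  obtain ⟨m, hm, hmax⟩ := zorn_subset_nonempty {Δ : Set BForm | Con Δ}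
    (fun c hc hchain hne => by
      refine ⟨⋃₀ c, ?_, fun s hs => Set.subset_sUnion_of_mem hs⟩
      intro hded
      obtain ⟨L, hL, hp⟩ := hded
      have : ∃ s ∈ c, ∀ E ∈ L, E ∈ s := by
        clear hp
        induction L with
        | nil => obtain ⟨s, hs⟩ := hne; exact ⟨s, hs, by simp⟩
        | cons E L ih =>
          obtain ⟨s, hs, hmem⟩ := ih fun F hF => hL F (by simp [hF])
          obtain ⟨t, ht, hEt⟩ := hL E (by simp)
          rcases hchain.total hs ht with hst | hts
          · exact ⟨t, ht, by
              intro F hF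
              rcases List.mem_cons.1 hF with rfl | hF
              · exact hEt
              · exact hst (hmem F hF)⟩
          · exact ⟨s, hs, by
              intro F hF
              rcases List.mem_cons.1 hF with rfl | hF
              · exact hts hEt
              · exact hmem F hF⟩
      obtain ⟨s, hs, hmem⟩ := this
      exact hc hs ⟨L, hmem, hp⟩)
    Γ h
  refine ⟨m, hm, hmax.prop, fun y hy hsub => ?_⟩
  exact (hmax.eq_of_subset hy hsub).symm

theorem mcs_ded {x : Set BForm} (hx : IsMCS x) {B : BForm} (h : Ded x B) : B ∈ x := by
  by_contra hB
  have hni : ¬ Con (insert B x) := by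
    intro hcon
    have := hx.2 _ hcon (Set.subset_insert _ _)
    exact hB (this ▸ Set.mem_insert _ _)
  have hded : Ded (insert B x) BForm.bot := not_not.1 hni
  have h1 : Ded x (B.imp BForm.bot) := ded_insert hded
  exact hx.1 (ded_mp h1 h)

theorem mcs_mem_of_prv {x : Set BForm} (hx : IsMCS x) {A : BForm} (h : Prv A) : A ∈ x :=
  mcs_ded hx (ded_of_prv h)

theorem ded_of_mem {Γ : Set BForm} {A : BForm} (h : A ∈ Γ) : Ded Γ A :=
  ⟨[A], by simp [h], prv_and_left _ _⟩

theorem mcs_mp {x : Set BForm} (hx : IsMCS x) {A B : BForm}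
    (h1 : (A.imp B) ∈ x) (h2 : A ∈ x) : B ∈ x :=
  mcs_ded hx (ded_mp (ded_of_mem h1) (ded_of_mem h2))

theorem mcs_neg_iff {x : Set BForm} (hx : IsMCS x) {A : BForm} : A.neg ∈ x ↔ A ∉ x := by
  constructor
  · intro h1 h2
    exact hx.1 (ded_mp (ded_of_mem h1) (ded_of_mem h2))
  · intro h
    have hni : ¬ Con (insert A x) := by
      intro hcon
      have := hx.2 _ hcon (Set.subset_insert _ _)
      exact h (this ▸ Set.mem_insert _ _)
    exact mcs_ded hx (ded_insert (not_not.1 hni))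

theorem mcs_imp_iff {x : Set BForm} (hx : IsMCS x) {A B : BForm} :
    (A.imp B) ∈ x ↔ (A ∈ x → B ∈ x) := by
  constructor
  · exact fun h hA => mcs_mp hx h hA
  · intro h
    by_cases hA : A ∈ x
    · exact mcs_mp hx (mcs_mem_of_prv hx BProv.pl1) (h hA)
    · have hna : A.neg ∈ x := (mcs_neg_iff hx).2 hA
      have : Prv (A.neg.imp (A.imp B)) := by
        apply prv_of_hyp; apply Hyp.ded; apply Hyp.ded
        have h1 : Hyp [A, A.neg] A := Hyp.hyp (by simp)
        have h2 : Hyp [A, A.neg] A.neg := Hyp.hyp (by simp)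
        exact hyp_botE _ (Hyp.mp h2 h1)
      exact mcs_mp hx (mcs_mem_of_prv hx this) hna

theorem mcs_bot {x : Set BForm} (hx : IsMCS x) : BForm.bot ∉ x := by
  intro h
  exact hx.1 (ded_of_mem h)

theorem mcs_conj_mem {x : Set BForm} (hx : IsMCS x) {L : List BForm}
    (h : ∀ E ∈ L, E ∈ x) : conjL L ∈ x :=
  mcs_ded hx ⟨L, h, prv_imp_self _⟩

/-- The existence lemma. -/
theorem exists_succ {x : Set BForm} (hx : IsMCS x) {i : Fin 2} {B : BForm}
    (h : BForm.box i B ∉ x) :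
    ∃ y, IsMCS y ∧ (∀ D, BForm.box i D ∈ x → D ∈ y) ∧ B ∉ y := by
  set Γ' : Set BForm := {D | BForm.box i D ∈ x} ∪ {B.neg} with hΓ'
  have hcon : Con Γ' := by
    intro hded
    obtain ⟨L, hL, hp⟩ := hded
    have hsplit : ∃ L2 : List BForm, (∀ E ∈ L2, BForm.box i E ∈ x) ∧
        ∀ E ∈ L, E ∈ L2 ∨ E = B.neg := by
      clear hp
      induction L with
      | nil => exact ⟨[], by simp, by simp⟩
      | cons E L ih =>
        obtain ⟨L2, h1, h2⟩ := ih fun F hF => hL F (by simp [hF])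
        rcases hL E (by simp) with h | h
        · exact ⟨E :: L2, by
            intro F hF
            rcases List.mem_cons.1 hF with rfl | hF
            · exact h
            · exact h1 F hF, by
            intro F hF
            rcases List.mem_cons.1 hF with rfl | hF
            · exact Or.inl (by simp)
            · rcases h2 F hF with h | h
              · exact Or.inl (by simp [h])
              · exact Or.inr h⟩
        · refine ⟨L2, h1, ?_⟩
          intro F hF
          rcases List.mem_cons.1 hF with rfl | hF
          · exact Or.inr h
          · exact h2 F hF
    obtain ⟨L2, h1, h2⟩ := hsplit
    have hbig : Prv ((bAnd B.neg (conjL L2)).imp (conjL L)) := by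
      apply conj_intro_all
      intro E hE
      rcases h2 E hE with h | rfl
      · exact prv_syll (prv_and_right _ _) (conj_elim_mem h)
      · exact prv_and_left _ _
    have hb : Prv ((conjL L2).imp B) := by
      apply prv_of_hyp; apply Hyp.ded
      apply hyp_dne
      apply Hyp.ded
      have hn : Hyp [B.neg, conjL L2] B.neg := Hyp.hyp (by simp)
      have hl : Hyp [B.neg, conjL L2] (conjL L2) := Hyp.hyp (by simp)
      exact Hyp.mp (Hyp.thm (prv_syll hbig hp)) (hyp_andI hn hl)
    have hboxed : Prv ((conjL (L2.map (BForm.box i))).imp (BForm.box i B)) :=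
      prv_syll (box_conj i L2) (mono_box hb)
    have hmem : conjL (L2.map (BForm.box i)) ∈ x := by
      apply mcs_conj_mem hx
      intro E hE
      rcases List.mem_map.1 hE with ⟨F, hF, rfl⟩
      exact h1 F hF
    exact h (mcs_mp hx (mcs_mem_of_prv hx hboxed) hmem)
  obtain ⟨y, hsub, hy⟩ := lindenbaum hcon
  refine ⟨y, hy, fun D hD => hsub (Or.inl hD), ?_⟩
  have : B.neg ∈ y := hsub (Or.inr rfl)
  exact (mcs_neg_iff hy).1 this

/-! ### The canonical model and the surgery frame -/

/-- The type of maximal consistent sets. -/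
def MCS : Type := {x : Set BForm // IsMCS x}

/-- Canonical relations. -/
def Rc (i : Fin 2) (x y : MCS) : Prop := ∀ D, BForm.box i D ∈ x.1 → D ∈ y.1

theorem Rc_refl (i : Fin 2) (x : MCS) : Rc i x x :=
  fun D hD => mcs_mp x.2 (mcs_mem_of_prv x.2 (axT i D)) hD

theorem Rc_trans {i : Fin 2} {x y z : MCS} (h1 : Rc i x y) (h2 : Rc i y z) : Rc i x z :=
  fun D hD => h2 D (h1 _ (mcs_mp x.2 (mcs_mem_of_prv x.2 (ax4 i D)) hD))

/-- The "collapse witness" relation. -/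
def GoodR (x y : MCS) : Prop := Rc 0 x y ∧ ∀ C, BForm.box 0 C ∈ x.1 → tau C ∈ y.1

theorem GoodR_left {x y z : MCS} (h1 : Rc 0 x y) (h2 : GoodR y z) : GoodR x z := by
  refine ⟨Rc_trans h1 h2.1, fun C hC => ?_⟩
  exact h2.2 C (h1 _ (mcs_mp x.2 (mcs_mem_of_prv x.2 (ax4 0 C)) hC))

/-- Existence of collapse witnesses: the crucial application of the key lemma. -/
theorem exists_good (x : MCS) : ∃ y : MCS, GoodR x y := by
  set Γ' : Set BForm :=
    {D | BForm.box 0 D ∈ x.1} ∪ {E | ∃ C, BForm.box 0 C ∈ x.1 ∧ E = tau C} with hΓ'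
  have hcon : Con Γ' := by
    intro hded
    obtain ⟨L, hL, hp⟩ := hded
    have hsplit : ∃ Bs Cs : List BForm, (∀ B ∈ Bs, BForm.box 0 B ∈ x.1) ∧
        (∀ C ∈ Cs, BForm.box 0 C ∈ x.1) ∧
        (∀ E ∈ L, E ∈ Bs ∨ ∃ C ∈ Cs, E = tau C) := by
      clear hp
      induction L with
      | nil => exact ⟨[], [], by simp, by simp, by simp⟩
      | cons E L ih =>
        obtain ⟨Bs, Cs, h1, h2, h3⟩ := ih fun F hF => hL F (by simp [hF])
        rcases hL E (by simp) with h | ⟨C, hC, rfl⟩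
        · refine ⟨E :: Bs, Cs, ?_, h2, ?_⟩
          · intro F hF
            rcases List.mem_cons.1 hF with rfl | hF
            · exact h
            · exact h1 F hF
          · intro F hF
            rcases List.mem_cons.1 hF with rfl | hF
            · exact Or.inl (by simp)
            · rcases h3 F hF with h | h
              · exact Or.inl (by simp [h])
              · exact Or.inr h
        · refine ⟨Bs, C :: Cs, h1, ?_, ?_⟩
          · intro F hF
            rcases List.mem_cons.1 hF with rfl | hF
            · exact hC
            · exact h2 F hF
          · intro F hF
            rcases List.mem_cons.1 hF with rfl | hF
            · exact Or.inr ⟨C, by simp, rfl⟩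
            · rcases h3 F hF with h | ⟨C', hC', rfl⟩
              · exact Or.inl h
              · exact Or.inr ⟨C', by simp [hC'], rfl⟩
    obtain ⟨Bs, Cs, h1, h2, h3⟩ := hsplit
    set BIG := bAnd (conjL Bs) (conjL (Cs.map tau)) with hBIG
    have hbig : Prv (BIG.imp (conjL L)) := by
      apply conj_intro_all
      intro E hE
      rcases h3 E hE with h | ⟨C, hC, rfl⟩
      · exact prv_syll (prv_and_left _ _) (conj_elim_mem h)
      · exact prv_syll (prv_and_right _ _) (conj_elim_mem (List.mem_map_of_mem hC))
    have hnd : Prv ((BForm.dia 0 BIG).imp BForm.bot) :=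
      prv_syll (mono_dia (prv_syll hbig hp)) (dia_bot 0)
    have hkey : Prv ((conjL ((Bs ++ Cs).map (BForm.box 0))).imp (BForm.dia 0 BIG)) :=
      key2 Bs Cs
    have hmem : conjL ((Bs ++ Cs).map (BForm.box 0)) ∈ x.1 := by
      apply mcs_conj_mem x.2
      intro E hE
      rcases List.mem_map.1 hE with ⟨F, hF, rfl⟩
      rcases List.mem_append.1 hF with h | h
      · exact h1 F h
      · exact h2 F h
    have hdia : BForm.dia 0 BIG ∈ x.1 := mcs_mp x.2 (mcs_mem_of_prv x.2 hkey) hmem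
    have hneg : (BForm.dia 0 BIG).neg ∈ x.1 := mcs_mem_of_prv x.2 hnd
    exact ((mcs_neg_iff x.2).1 hneg) hdia
  obtain ⟨y, hsub, hy⟩ := lindenbaum hcon
  refine ⟨⟨y, hy⟩, fun D hD => hsub (Or.inl hD), fun C hC => hsub (Or.inr ⟨C, hC, rfl⟩)⟩

/-- The carrier of the surgery frame. -/
def Wm : Type := MCS × Bool

/-- First relation of the surgery frame. -/
def R1m : Wm → Wm → Prop := fun p q =>
  (p.2 = false ∧ q.2 = false ∧ Rc 0 p.1 q.1) ∨
  (p.2 = false ∧ q.2 = true ∧ GoodR p.1 q.1) ∨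
  (p.2 = true ∧ q.2 = true ∧ p.1 = q.1)

/-- Second relation of the surgery frame. -/
def R2m : Wm → Wm → Prop := fun p q => p.2 = q.2 ∧ Rc 1 p.1 q.1

/-- Canonical valuation. -/
def Vm : ℕ → Wm → Prop := fun n p => BForm.var n ∈ p.1.1

theorem R1m_refl (p : Wm) : R1m p p := by
  rcases p with ⟨x, _ | _⟩
  · exact Or.inl ⟨rfl, rfl, Rc_refl 0 x⟩
  · exact Or.inr (Or.inr ⟨rfl, rfl, rfl⟩)

theorem R1m_trans {p q r : Wm} (h1 : R1m p q) (h2 : R1m q r) : R1m p r := by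
  rcases h1 with ⟨hp, hq, h1⟩ | ⟨hp, hq, h1⟩ | ⟨hp, hq, h1⟩ <;>
    rcases h2 with ⟨hq', hr, h2⟩ | ⟨hq', hr, h2⟩ | ⟨hq', hr, h2⟩
  · exact Or.inl ⟨hp, hr, Rc_trans h1 h2⟩
  · exact Or.inr (Or.inl ⟨hp, hr, GoodR_left h1 h2⟩)
  · rw [hq] at hq'; exact absurd hq' (by simp)
  · rw [hq] at hq'; exact absurd hq' (by simp)
  · rw [hq] at hq'; exact absurd hq' (by simp)
  · exact Or.inr (Or.inl ⟨hp, hr, h2 ▸ h1⟩)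
  · rw [hq] at hq'; exact absurd hq' (by simp)
  · rw [hq] at hq'; exact absurd hq' (by simp)
  · exact Or.inr (Or.inr ⟨hp, hr, h1.trans h2⟩)

theorem R2m_refl (p : Wm) : R2m p p := ⟨rfl, Rc_refl 1 p.1⟩

theorem R2m_trans {p q r : Wm} (h1 : R2m p q) (h2 : R2m q r) : R2m p r :=
  ⟨h1.1.trans h2.1, Rc_trans h1.2 h2.2⟩

theorem R1m_final (y : MCS) {r : Wm} (h : R1m (y, true) r) : r = (y, true) := by
  rcases h with ⟨hp, _, _⟩ | ⟨hp, _, _⟩ | ⟨_, hr, h⟩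
  · simp at hp
  · simp at hp
  · rcases r with ⟨z, b⟩
    simp_all <;> rfl

/-! ### Truth lemmas -/

theorem Rm0 {W : Type} (R1 R2 : W → W → Prop) : (![R1, R2] : Fin 2 → W → W → Prop) 0 = R1 := rfl

theorem Rm1 {W : Type} (R1 R2 : W → W → Prop) : (![R1, R2] : Fin 2 → W → W → Prop) 1 = R2 := rfl

theorem truth1 : ∀ (C : BForm) (y : MCS),
    BSat ![R1m, R2m] Vm (y, true) C ↔ tau C ∈ y.1 := by
  intro C
  induction C with
  | var n => intro y; exact Iff.rfl
  | bot => intro y; simp [BSat, tau]; exact mcs_bot y.2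
  | imp A B ihA ihB =>
    intro y
    show (BSat ![R1m, R2m] Vm (y, true) A → BSat ![R1m, R2m] Vm (y, true) B) ↔ _
    rw [ihA, ihB]
    show _ ↔ ((tau A).imp (tau B)) ∈ y.1
    rw [mcs_imp_iff y.2]
  | box i C ih =>
    intro y
    have hi : i = 0 ∨ i = 1 := by
      rcases i with ⟨_ | _ | n, h⟩
      · left; rfl
      · right; rfl
      · omega
    rcases hi with rfl | rfl
    · show (∀ q, R1m (y, true) q → BSat ![R1m, R2m] Vm q C) ↔ tau (BForm.box 0 C) ∈ y.1
      have htau : tau (BForm.box 0 C) = tau C := by simp [tau]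
      rw [htau]
      constructor
      · intro h
        exact (ih y).1 (h (y, true) (R1m_refl _))
      · intro h q hq
        have := R1m_final y hq
        subst this
        exact (ih y).2 h
    · show (∀ q, R2m (y, true) q → BSat ![R1m, R2m] Vm q C) ↔ tau (BForm.box 1 C) ∈ y.1
      have htau : tau (BForm.box 1 C) = BForm.box 1 (tau C) := by simp [tau]
      rw [htau]
      constructor
      · intro h
        by_contra hn
        obtain ⟨z, hz, hzin, hznot⟩ := exists_succ y.2 hn
        exact hznot ((ih ⟨z, hz⟩).1 (h (⟨z, hz⟩, true) ⟨rfl, hzin⟩))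
      · intro h q hq
        rcases q with ⟨z, b⟩
        have hb : b = true := hq.1.symm
        subst hb
        exact (ih z).2 (hq.2 _ h)

theorem truth0 : ∀ (C : BForm) (x : MCS),
    BSat ![R1m, R2m] Vm (x, false) C ↔ C ∈ x.1 := by
  intro C
  induction C with
  | var n => intro x; exact Iff.rfl
  | bot => intro x; simp [BSat]; exact mcs_bot x.2
  | imp A B ihA ihB =>
    intro x
    show (BSat ![R1m, R2m] Vm (x, false) A → BSat ![R1m, R2m] Vm (x, false) B) ↔ _
    rw [ihA, ihB, mcs_imp_iff x.2]
  | box i C ih =>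
    intro x
    have hi : i = 0 ∨ i = 1 := by
      rcases i with ⟨_ | _ | n, h⟩
      · left; rfl
      · right; rfl
      · omega
    rcases hi with rfl | rfl
    · show (∀ q, R1m (x, false) q → BSat ![R1m, R2m] Vm q C) ↔ BForm.box 0 C ∈ x.1
      constructor
      · intro h
        by_contra hn
        obtain ⟨z, hz, hzin, hznot⟩ := exists_succ x.2 hn
        exact hznot ((ih ⟨z, hz⟩).1 (h (⟨z, hz⟩, false) (Or.inl ⟨rfl, rfl, hzin⟩)))
      · intro h q hq
        rcases hq with ⟨_, hq2, hr⟩ | ⟨_, hq2, hr⟩ | ⟨hp, _, _⟩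
        · rcases q with ⟨z, b⟩
          simp only at hq2
          subst hq2
          exact (ih z).2 (hr _ h)
        · rcases q with ⟨z, b⟩
          simp only at hq2
          subst hq2
          exact (truth1 C z).2 (hr.2 C h)
        · simp at hp
    · show (∀ q, R2m (x, false) q → BSat ![R1m, R2m] Vm q C) ↔ BForm.box 1 C ∈ x.1
      constructor
      · intro h
        by_contra hn
        obtain ⟨z, hz, hzin, hznot⟩ := exists_succ x.2 hn
        exact hznot ((ih ⟨z, hz⟩).1 (h (⟨z, hz⟩, false) ⟨rfl, hzin⟩))
      · intro h q hq
        rcases q with ⟨z, b⟩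
        have hb : b = false := hq.1.symm
        subst hb
        exact (ih z).2 (hq.2 _ h)

/-! ### Soundness -/

theorem MKSat_subst {W : Type} (R : W → W → Prop) (V : ℕ → W → Prop) (σ : ℕ → MForm) :
    ∀ (A : MForm) (x : W),
      MKSat R V x (A.subst σ) ↔ MKSat R (fun n y => MKSat R V y (σ n)) x A := by
  intro A
  induction A with
  | var n => intro x; exact Iff.rfl
  | bot => intro x; exact Iff.rfl
  | imp A B ihA ihB => intro x; exact imp_congr (ihA x) (ihB x)
  | box A ih =>
    intro x
    exact forall_congr' fun y => imp_congr Iff.rfl (ih y)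

theorem BSat_subst {W : Type} (R : Fin 2 → W → W → Prop) (V : ℕ → W → Prop) (σ : ℕ → BForm) :
    ∀ (A : BForm) (x : W),
      BSat R V x (A.subst σ) ↔ BSat R (fun n y => BSat R V y (σ n)) x A := by
  intro A
  induction A with
  | var n => intro x; exact Iff.rfl
  | bot => intro x; exact Iff.rfl
  | imp A B ihA ihB => intro x; exact imp_congr (ihA x) (ihB x)
  | box i A ih =>
    intro x
    exact forall_congr' fun y => imp_congr Iff.rfl (ih y)

theorem BSat_toB {W : Type} (R : Fin 2 → W → W → Prop) (V : ℕ → W → Prop) (i : Fin 2) :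
    ∀ (B : MForm) (x : W), BSat R V x (MForm.toB i B) ↔ MKSat (R i) V x B := by
  intro B
  induction B with
  | var n => intro x; exact Iff.rfl
  | bot => intro x; exact Iff.rfl
  | imp A B ihA ihB => intro x; exact imp_congr (ihA x) (ihB x)
  | box A ih =>
    intro x
    exact forall_congr' fun y => imp_congr Iff.rfl (ih y)

/-- Soundness of S4 over preorders. -/
theorem msound_S4 {W : Type} (R : W → W → Prop) (hrefl : ∀ x, R x x)
    (htrans : ∀ {x y z}, R x y → R y z → R x z) {B : MForm}
    (h : MProv S4Ax B) : MKValid R B := by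
  induction h with
  | axm hB =>
    rcases hB with rfl | hB
    · intro V x hbox
      exact hbox x (hrefl x)
    · rcases hB with rfl
      intro V x hbox y hxy z hyz
      exact hbox z (htrans hxy hyz)
  | pl1 => intro V x h1 _; exact h1
  | pl2 => intro V x h1 h2 h3; exact h1 h3 (h2 h3)
  | pl3 =>
    intro V x h1
    by_contra h2
    exact h1 h2
  | kax => intro V x h1 h2 y hxy; exact h1 y hxy (h2 y hxy)
  | mp _ _ ih1 ih2 => intro V x; exact ih1 V x (ih2 V x)
  | nec _ ih => intro V x y _; exact ih V y
  | subst σ _ ih =>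
    intro V x
    exact (MKSat_subst R V σ _ x).2 (ih _ x)

/-- Soundness of S4.1 over preorders in which every point sees a final point. -/
theorem msound_S41 {W : Type} (R : W → W → Prop) (hrefl : ∀ x, R x x)
    (htrans : ∀ {x y z}, R x y → R y z → R x z)
    (hfin : ∀ x, ∃ y, R x y ∧ ∀ z, R y z → z = y) {B : MForm}
    (h : MProv (S4Ax ∪ {McKM}) B) : MKValid R B := by
  induction h with
  | axm hB =>
    rcases hB with (rfl | hB) | rfl
    · intro V x hbox
      exact hbox x (hrefl x)
    · rcases hB with rfl
      intro V x hbox y hxy z hyz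
      exact hbox z (htrans hxy hyz)
    · -- McKinsey
      intro V x hbox
      obtain ⟨y, hxy, hfy⟩ := hfin x
      intro hall
      apply hall y hxy
      have hdia := hbox y hxy
      have hVy : V 0 y := by
        by_contra hV
        apply hdia
        intro z hyz hVz
        exact hV ((hfy z hyz) ▸ hVz)
      intro z hyz
      rw [hfy z hyz]
      exact hVy
  | pl1 => intro V x h1 _; exact h1
  | pl2 => intro V x h1 h2 h3; exact h1 h3 (h2 h3)
  | pl3 =>
    intro V x h1
    by_contra h2
    exact h1 h2
  | kax => intro V x h1 h2 y hxy; exact h1 y hxy (h2 y hxy)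
  | mp _ _ ih1 ih2 => intro V x; exact ih1 V x (ih2 V x)
  | nec _ ih => intro V x y _; exact ih V y
  | subst σ _ ih =>
    intro V x
    exact (MKSat_subst R V σ _ x).2 (ih _ x)

/-- Soundness of L over the frame class `C`. -/
theorem bsound {W : Type} (R : Fin 2 → W → W → Prop)
    (hrefl0 : ∀ x, R 0 x x) (htrans0 : ∀ {x y z}, R 0 x y → R 0 y z → R 0 x z)
    (hrefl1 : ∀ x, R 1 x x) (htrans1 : ∀ {x y z}, R 1 x y → R 1 y z → R 1 x z)
    (hcond : ∀ x, ∃ y, R 0 x y ∧ ∀ z, R 1 y z → ∀ u, R 0 z u → u = z)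
    {B : BForm} (h : BProv AxL B) : BValid R B := by
  have hfin : ∀ x, ∃ y, R 0 x y ∧ ∀ z, R 0 y z → z = y := by
    intro x
    obtain ⟨y, hxy, hy⟩ := hcond x
    exact ⟨y, hxy, fun z hz => hy y (hrefl1 y) z hz⟩
  induction h with
  | axm hB =>
    rcases hB with (⟨B', hB', rfl⟩ | ⟨B', hB', rfl⟩) | rfl
    · intro V x
      exact (BSat_toB R V 0 B' x).2 (msound_S41 (R 0) hrefl0 htrans0 hfin hB' V x)
    · intro V x
      exact (BSat_toB R V 1 B' x).2 (msound_S4 (R 1) hrefl1 htrans1 hB' V x)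
    · -- MKB
      intro V x
      show BSat R V x (BForm.dia 0 (BForm.box 1 ((BForm.dia 0 pB).imp (BForm.box 0 pB))))
      intro hall
      obtain ⟨y, hxy, hy⟩ := hcond x
      apply hall y hxy
      intro z hyz hdia u hzu
      have hu : u = z := hy z hyz u hzu
      rw [hu]
      by_contra hV
      apply hdia
      intro w hzw hVw
      exact hV ((hy z hyz w hzw) ▸ hVw)
  | pl1 => intro V x h1 _; exact h1
  | pl2 => intro V x h1 h2 h3; exact h1 h3 (h2 h3)
  | pl3 =>
    intro V x h1
    by_contra h2
    exact h1 h2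
  | kax i => intro V x h1 h2 y hxy; exact h1 y hxy (h2 y hxy)
  | mp _ _ ih1 ih2 => intro V x; exact ih1 V x (ih2 V x)
  | nec i _ ih => intro V x y _; exact ih V y
  | subst σ _ ih =>
    intro V x
    exact (BSat_subst R V σ _ x).2 (ih _ x)

/-- The surgery frame is in the class `C`. -/
theorem surgery_classC :
    (∀ x, (![R1m, R2m] : Fin 2 → Wm → Wm → Prop) 0 x x) ∧
    (∀ {x y z : Wm}, R1m x y → R1m y z → R1m x z) ∧
    (∀ x, R2m x x) ∧
    (∀ {x y z : Wm}, R2m x y → R2m y z → R2m x z) ∧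
    (∀ x : Wm, ∃ y, R1m x y ∧ ∀ z, R2m y z → ∀ u, R1m z u → u = z) := by
  refine ⟨R1m_refl, R1m_trans, R2m_refl, R2m_trans, ?_⟩
  intro p
  rcases p with ⟨x, _ | _⟩
  · obtain ⟨y, hy⟩ := exists_good x
    refine ⟨(y, true), Or.inr (Or.inl ⟨rfl, rfl, hy⟩), ?_⟩
    intro z hz u hu
    rcases z with ⟨z, b⟩
    have hb : b = true := hz.1.symm
    subst hb
    exact R1m_final z hu
  · refine ⟨(x, true), R1m_refl _, ?_⟩
    intro z hz u hu
    rcases z with ⟨z, b⟩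
    have hb : b = true := hz.1.symm
    subst hb
    exact R1m_final z hu

theorem main_completeness {A : BForm} (hA : A ∉ LL)
    (h : ∀ (W : Type) (R1 R2 : W → W → Prop), Nonempty W →
      (∀ B ∈ LL, BValid ![R1, R2] B) → BValid ![R1, R2] A) : False := by
  have hA' : ¬ Prv A := hA
  have hcon : Con {A.neg} := by
    intro hded
    obtain ⟨L, hL, hp⟩ := hded
    have h1 : Prv (A.neg.imp (conjL L)) := by
      apply conj_intro_all
      intro E hE
      have : E = A.neg := hL E hE
      subst this
      exact prv_imp_self _
    exact hA' (prv_of_neg_imp (prv_syll h1 hp))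
  obtain ⟨x0, hsub, hx0⟩ := lindenbaum hcon
  have hA0 : A ∉ x0 := (mcs_neg_iff hx0).1 (hsub rfl)
  obtain ⟨hr0, ht0, hr1, ht1, hc⟩ := surgery_classC
  have hvalid : ∀ B ∈ LL, BValid ![R1m, R2m] B := by
    intro B hB
    exact bsound ![R1m, R2m] hr0 (fun h1 h2 => ht0 h1 h2) hr1 (fun h1 h2 => ht1 h1 h2) hc hB
  have := h Wm R1m R2m ⟨(⟨x0, hx0⟩, false)⟩ hvalid Vm (⟨x0, hx0⟩, false)
  exact hA0 ((truth0 A ⟨x0, hx0⟩).1 this)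

end KC

/-- L = S4.1 ∗ S4 + ◇₁□₂(◇₁p → □₁p) is Kripke complete: it equals
the set of bimodal formulas valid in every Kripke 2-frame validating L. -/
theorem LL_kripke_complete :
    LL = {A : BForm | ∀ (W : Type) (R1 R2 : W → W → Prop), Nonempty W →
      (∀ B ∈ LL, BValid ![R1, R2] B) → BValid ![R1, R2] A} := by
  ext A
  simp only [Set.mem_setOf_eq]
  constructor
  · intro hA W R1 R2 _ hval
    exact hval A hA
  · intro h
    by_contra hA
    exact KC.main_completeness hA h
end

section
/- The logic L = S4.1 ∗ S4 + ◇₁□₂(◇₁p → □₁p) has the finite model property: every bimodal formula A ∉ L is refuted in some finite Kripke 2-frame validating L; equivalently, L is the logic of the class of finite Kripke 2-frames validating L. -/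
/- ============== Part A: deducibility machinery ============== -/

namespace FMP

open BForm

/-- Deducibility from a set of hypotheses. -/
inductive SProv (Ax : Set BForm) (Γ : Set BForm) : BForm → Prop
  | hyp {A : BForm} : A ∈ Γ → SProv Ax Γ A
  | thm {A : BForm} : BProv Ax A → SProv Ax Γ A
  | mp {A B : BForm} : SProv Ax Γ (A.imp B) → SProv Ax Γ A → SProv Ax Γ B

theorem BProv.imp_self (Ax : Set BForm) (A : BForm) : BProv Ax (A.imp A) :=
  BProv.mp (BProv.mp (BProv.pl2 (A := A) (B := A.imp A) (C := A)) BProv.pl1) BProv.pl1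

namespace SProv

variable {Ax Γ Δ : Set BForm} {A B C : BForm}

theorem mono (h : SProv Ax Γ A) (hs : Γ ⊆ Δ) : SProv Ax Δ A := by
  induction h with
  | hyp h => exact hyp (hs h)
  | thm h => exact thm h
  | mp _ _ ih1 ih2 => exact mp ih1 ih2

theorem toBProv (h : SProv Ax ∅ A) : BProv Ax A := by
  induction h with
  | hyp h => exact absurd h (Set.notMem_empty _)
  | thm h => exact h
  | mp _ _ ih1 ih2 => exact BProv.mp ih1 ih2

/-- Deduction theorem. -/
theorem ded (h : SProv Ax (insert B Γ) A) : SProv Ax Γ (B.imp A) := by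
  induction h with
  | hyp h =>
    rcases h with h | h
    · cases h; exact thm (BProv.imp_self Ax _)
    · exact mp (thm BProv.pl1) (hyp h)
  | thm h => exact mp (thm BProv.pl1) (thm h)
  | mp _ _ ih1 ih2 => exact mp (mp (thm BProv.pl2) ih1) ih2

theorem cut (h : SProv Ax Γ A) (hall : ∀ g ∈ Γ, SProv Ax Δ g) : SProv Ax Δ A := by
  induction h with
  | hyp h => exact hall _ h
  | thm h => exact thm h
  | mp _ _ ih1 ih2 => exact mp ih1 ih2

theorem chain {c : Set (Set BForm)} (hc : IsChain (· ⊆ ·) c) (hne : c.Nonempty)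
    (h : SProv Ax (⋃₀ c) A) : ∃ S ∈ c, SProv Ax S A := by
  induction h with
  | hyp h =>
    obtain ⟨S, hS, hAS⟩ := h
    exact ⟨S, hS, hyp hAS⟩
  | thm h => exact ⟨hne.choose, hne.choose_spec, thm h⟩
  | mp _ _ ih1 ih2 =>
    obtain ⟨S1, hS1, h1⟩ := ih1
    obtain ⟨S2, hS2, h2⟩ := ih2
    rcases eq_or_ne S1 S2 with rfl | hne'
    · exact ⟨S1, hS1, mp h1 h2⟩
    · rcases hc hS1 hS2 hne' with hsub | hsub
      · exact ⟨S2, hS2, mp (h1.mono hsub) h2⟩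
      · exact ⟨S1, hS1, mp h1 (h2.mono hsub)⟩

theorem finite_list (h : SProv Ax Γ A) :
    ∃ l : List BForm, (∀ B ∈ l, B ∈ Γ) ∧ SProv Ax {B | B ∈ l} A := by
  induction h with
  | hyp h => exact ⟨[_], by simpa using h, hyp (by simp)⟩
  | thm h => exact ⟨[], by simp, thm h⟩
  | mp _ _ ih1 ih2 =>
    obtain ⟨l1, hl1, h1⟩ := ih1
    obtain ⟨l2, hl2, h2⟩ := ih2
    refine ⟨l1 ++ l2, ?_, ?_⟩
    · intro B hB; rcases List.mem_append.1 hB with h | h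
      · exact hl1 _ h
      · exact hl2 _ h
    · exact mp (h1.mono (by intro B hB; simp only [Set.mem_setOf_eq, List.mem_append]; exact Or.inl hB))
        (h2.mono (by intro B hB; simp only [Set.mem_setOf_eq, List.mem_append]; exact Or.inr hB))

end SProv

end FMP
/- ============== Part B: derivations in L ============== -/

namespace FMP

open BForm

/-- The axiom set of L. -/
def LAx : Set BForm := FusionAx ∪ {MKB}

variable {Ax : Set BForm}

theorem compose {A B C : BForm} (h1 : BProv Ax (A.imp B)) (h2 : BProv Ax (B.imp C)) :
    BProv Ax (A.imp C) :=
  BProv.mp (BProv.mp BProv.pl2 (BProv.mp BProv.pl1 h2)) h1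

theorem explosion (A : BForm) : BProv Ax (BForm.bot.imp A) :=
  compose (BProv.pl1 (A := BForm.bot) (B := A.neg)) BProv.pl3

theorem dni (A : BForm) : BProv Ax (A.imp A.neg.neg) := by
  apply SProv.toBProv; apply SProv.ded; apply SProv.ded
  exact SProv.mp (SProv.hyp (A := A.neg) (by simp)) (SProv.hyp (A := A) (by simp))

theorem contra1 (A B : BForm) : BProv Ax ((A.imp B).imp (B.neg.imp A.neg)) := by
  apply SProv.toBProv; apply SProv.ded; apply SProv.ded; apply SProv.ded
  exact SProv.mp (SProv.hyp (A := B.neg) (by simp))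
    (SProv.mp (SProv.hyp (A := A.imp B) (by simp)) (SProv.hyp (A := A) (by simp)))

theorem contraRule {A B : BForm} (h : BProv Ax (A.imp B)) : BProv Ax (B.neg.imp A.neg) :=
  BProv.mp (contra1 A B) h

theorem contraRule' {A B : BForm} (h : BProv Ax (A.neg.imp B.neg)) : BProv Ax (B.imp A) :=
  compose (dni B) (compose (contraRule h) BProv.pl3)

/-- Conjunction. -/
def andB (X Y : BForm) : BForm := (X.imp Y.neg).neg

theorem and_intro (X Y : BForm) : BProv Ax (X.imp (Y.imp (andB X Y))) := by
  apply SProv.toBProv; apply SProv.ded; apply SProv.ded; apply SProv.ded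
  exact SProv.mp (SProv.mp (SProv.hyp (A := X.imp Y.neg) (by simp))
    (SProv.hyp (A := X) (by simp))) (SProv.hyp (A := Y) (by simp))

theorem and_left (X Y : BForm) : BProv Ax ((andB X Y).imp X) := by
  apply SProv.toBProv; apply SProv.ded
  refine SProv.mp (SProv.thm BProv.pl3) ?_
  apply SProv.ded
  refine SProv.mp (SProv.hyp (A := (X.imp Y.neg).neg) (by simp [andB])) ?_
  apply SProv.ded
  exact SProv.mp (SProv.thm (explosion Y.neg))
    (SProv.mp (SProv.hyp (A := X.neg) (by simp)) (SProv.hyp (A := X) (by simp)))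

theorem and_right (X Y : BForm) : BProv Ax ((andB X Y).imp Y) := by
  apply SProv.toBProv; apply SProv.ded
  refine SProv.mp (SProv.thm BProv.pl3) ?_
  apply SProv.ded
  refine SProv.mp (SProv.hyp (A := (X.imp Y.neg).neg) (by simp [andB])) ?_
  exact SProv.mp (SProv.thm BProv.pl1) (SProv.hyp (A := Y.neg) (by simp))

theorem boxMono (i : Fin 2) {A B : BForm} (h : BProv Ax (A.imp B)) :
    BProv Ax ((BForm.box i A).imp (BForm.box i B)) :=
  BProv.mp (BProv.kax i) (BProv.nec i h)

theorem dualK (i : Fin 2) (A B : BForm) :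
    BProv Ax ((BForm.box i (A.imp B)).imp ((BForm.dia i A).imp (BForm.dia i B))) := by
  apply SProv.toBProv; apply SProv.ded; apply SProv.ded; apply SProv.ded
  refine SProv.mp (SProv.hyp (A := (BForm.box i A.neg).neg) (by simp [BForm.dia])) ?_
  refine SProv.mp (SProv.mp (SProv.thm (BProv.kax i)) ?_) (SProv.hyp (A := BForm.box i B.neg) (by simp [BForm.dia]))
  exact SProv.mp (SProv.thm (boxMono i (contra1 A B))) (SProv.hyp (A := BForm.box i (A.imp B)) (by simp))

theorem diaMonoRule (i : Fin 2) {A B : BForm} (h : BProv Ax (A.imp B)) :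
    BProv Ax ((BForm.dia i A).imp (BForm.dia i B)) :=
  BProv.mp (dualK i A B) (BProv.nec i h)

theorem diaT (i : Fin 2) {A : BForm} (hT : BProv Ax ((BForm.box i A.neg).imp A.neg)) :
    BProv Ax (A.imp (BForm.dia i A)) := by
  apply SProv.toBProv; apply SProv.ded; apply SProv.ded
  exact SProv.mp (SProv.mp (SProv.thm hT) (SProv.hyp (A := BForm.box i A.neg) (by simp)))
    (SProv.hyp (A := A) (by simp))

theorem boxK2 (i : Fin 2) (X Y : BForm) :
    BProv Ax ((BForm.box i X).imp ((BForm.box i Y).imp (BForm.box i (andB X Y)))) := by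
  apply SProv.toBProv; apply SProv.ded; apply SProv.ded
  refine SProv.mp (SProv.mp (SProv.thm (BProv.kax i)) ?_) (SProv.hyp (A := BForm.box i Y) (by simp))
  exact SProv.mp (SProv.thm (boxMono i (and_intro X Y))) (SProv.hyp (A := BForm.box i X) (by simp))

theorem box_dia_pair (i : Fin 2) (X Y : BForm) :
    BProv Ax ((BForm.box i X).imp ((BForm.dia i Y).imp (BForm.dia i (andB X Y)))) := by
  apply SProv.toBProv; apply SProv.ded
  refine SProv.mp (SProv.thm (dualK i Y (andB X Y))) ?_
  have h : BProv Ax (X.imp (Y.imp (andB X Y))) := and_intro X Y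
  exact SProv.mp (SProv.thm (boxMono i h)) (SProv.hyp (by simp))

end FMP
/- ============== Part B2: the specific axioms of L ============== -/

namespace FMP

open BForm

theorem mem_S41L_T : (MForm.box pM).imp pM ∈ S41L :=
  MProv.axm (Set.mem_union_left _ (Set.mem_insert _ _))

theorem mem_S41L_4 : (MForm.box pM).imp (MForm.box (MForm.box pM)) ∈ S41L :=
  MProv.axm (Set.mem_union_left _ (Set.mem_insert_of_mem _ rfl))

theorem mem_S41L_McK : McKM ∈ S41L :=
  MProv.axm (Set.mem_union_right _ rfl)

theorem mem_S4L_T : (MForm.box pM).imp pM ∈ S4L := MProv.axm (Set.mem_insert _ _)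

theorem mem_S4L_4 : (MForm.box pM).imp (MForm.box (MForm.box pM)) ∈ S4L :=
  MProv.axm (Set.mem_insert_of_mem _ rfl)

theorem axT (i : Fin 2) (A : BForm) : BProv LAx ((BForm.box i A).imp A) := by
  fin_cases i
  · have h : BProv LAx (MForm.toB 0 ((MForm.box pM).imp pM)) :=
      BProv.axm (Set.mem_union_left _ (Set.mem_union_left _ ⟨_, mem_S41L_T, rfl⟩))
    exact BProv.subst (fun _ => A) h
  · have h : BProv LAx (MForm.toB 1 ((MForm.box pM).imp pM)) :=
      BProv.axm (Set.mem_union_left _ (Set.mem_union_right _ ⟨_, mem_S4L_T, rfl⟩))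
    exact BProv.subst (fun _ => A) h

theorem ax4 (i : Fin 2) (A : BForm) :
    BProv LAx ((BForm.box i A).imp (BForm.box i (BForm.box i A))) := by
  fin_cases i
  · have h : BProv LAx (MForm.toB 0 ((MForm.box pM).imp (MForm.box (MForm.box pM)))) :=
      BProv.axm (Set.mem_union_left _ (Set.mem_union_left _ ⟨_, mem_S41L_4, rfl⟩))
    exact BProv.subst (fun _ => A) h
  · have h : BProv LAx (MForm.toB 1 ((MForm.box pM).imp (MForm.box (MForm.box pM)))) :=
      BProv.axm (Set.mem_union_left _ (Set.mem_union_right _ ⟨_, mem_S4L_4, rfl⟩))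
    exact BProv.subst (fun _ => A) h

theorem axMcK (A : BForm) :
    BProv LAx ((BForm.box 0 (BForm.dia 0 A)).imp (BForm.dia 0 (BForm.box 0 A))) := by
  have h : BProv LAx (MForm.toB 0 McKM) :=
    BProv.axm (Set.mem_union_left _ (Set.mem_union_left _ ⟨_, mem_S41L_McK, rfl⟩))
  exact BProv.subst (fun _ => A) h

/-- θ C = □₂(◇₁C → □₁C). -/
def theta (C : BForm) : BForm := BForm.box 1 ((BForm.dia 0 C).imp (BForm.box 0 C))

theorem axMKB (C : BForm) : BProv LAx (BForm.dia 0 (theta C)) := by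
  have h : BProv LAx MKB := BProv.axm (Set.mem_union_right _ rfl)
  exact BProv.subst (fun _ => C) h

theorem diaT' (i : Fin 2) (A : BForm) : BProv LAx (A.imp (BForm.dia i A)) :=
  diaT i (axT i A.neg)

theorem dia_dia (i : Fin 2) (A : BForm) :
    BProv LAx ((BForm.dia i (BForm.dia i A)).imp (BForm.dia i A)) := by
  have h1 : BProv LAx ((BForm.box i A.neg).imp (BForm.box i (BForm.dia i A).neg)) :=
    compose (ax4 i A.neg) (boxMono i (dni (BForm.box i A.neg)))
  exact contraRule h1

theorem trick {X : BForm} (h : BProv LAx (BForm.dia 0 X)) :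
    BProv LAx (BForm.dia 0 (BForm.box 0 X)) :=
  BProv.mp (axMcK X) (BProv.nec 0 h)

theorem Dand {X Y : BForm} (hX : BProv LAx (BForm.dia 0 (BForm.box 0 X)))
    (hY : BProv LAx (BForm.dia 0 (BForm.box 0 Y))) :
    BProv LAx (BForm.dia 0 (BForm.box 0 (andB X Y))) := by
  have step2 : BProv LAx ((andB (BForm.box 0 X) (BForm.box 0 Y)).imp (BForm.box 0 (andB X Y))) := by
    apply SProv.toBProv; apply SProv.ded
    refine SProv.mp (SProv.mp (SProv.thm (boxK2 0 X Y)) ?_) ?_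
    · exact SProv.mp (SProv.thm (and_left (BForm.box 0 X) (BForm.box 0 Y))) (SProv.hyp (by simp))
    · exact SProv.mp (SProv.thm (and_right (BForm.box 0 X) (BForm.box 0 Y))) (SProv.hyp (by simp))
  have step1 : BProv LAx ((BForm.box 0 X).imp
      (BForm.dia 0 (andB (BForm.box 0 X) (BForm.box 0 Y)))) := by
    apply SProv.toBProv; apply SProv.ded
    refine SProv.mp (SProv.mp (SProv.thm (box_dia_pair 0 (BForm.box 0 X) (BForm.box 0 Y))) ?_)
      (SProv.thm hY)
    exact SProv.mp (SProv.thm (ax4 0 X)) (SProv.hyp (by simp))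
  have q : BProv LAx ((BForm.box 0 X).imp (BForm.dia 0 (BForm.box 0 (andB X Y)))) :=
    compose step1 (diaMonoRule 0 step2)
  exact BProv.mp (compose (diaMonoRule 0 q) (dia_dia 0 _)) hX

/-- ⊤. -/
def topB : BForm := BForm.bot.neg

/-- Conjunction of a list. -/
def conjL (L : List BForm) : BForm := L.foldr andB topB

theorem conj_proj {L : List BForm} {X : BForm} (hX : X ∈ L) :
    BProv LAx ((conjL L).imp X) := by
  induction L with
  | nil => simp at hX
  | cons Y L ih =>
    rcases List.mem_cons.1 hX with rfl | hX
    · exact and_left _ _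
    · exact compose (and_right _ _) (ih hX)

theorem Dconj {L : List BForm} (h : ∀ X ∈ L, BProv LAx (BForm.dia 0 X)) :
    BProv LAx (BForm.dia 0 (BForm.box 0 (conjL L))) := by
  induction L with
  | nil =>
    have htop : BProv LAx topB := BProv.imp_self _ _
    exact BProv.mp (diaT' 0 _) (BProv.nec 0 htop)
  | cons X L ih =>
    exact Dand (trick (h X (by simp))) (ih (fun Y hY => h Y (by simp [hY])))

theorem diaConj {L : List BForm} (h : ∀ X ∈ L, BProv LAx (BForm.dia 0 X)) :
    BProv LAx (BForm.dia 0 (conjL L)) :=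
  BProv.mp (diaMonoRule 0 (axT 0 (conjL L))) (Dconj h)

end FMP
/- ============== Part C: maximal consistent sets ============== -/

namespace FMP

open BForm

/-- Consistency of a set of formulas. -/
def Con (Ax : Set BForm) (S : Set BForm) : Prop := ¬ SProv Ax S BForm.bot

/-- Maximal consistent sets. -/
def MCS (Ax : Set BForm) (S : Set BForm) : Prop :=
  Con Ax S ∧ ∀ A : BForm, A ∈ S ∨ A.neg ∈ S

variable {Ax : Set BForm} {x y : Set BForm} {A B : BForm}

theorem MCS.mem_of_prov (hx : MCS Ax x) (h : SProv Ax x A) : A ∈ x := by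
  rcases hx.2 A with hA | hA
  · exact hA
  · exact absurd (SProv.mp (SProv.hyp hA) h) hx.1

theorem MCS.mem_of_thm (hx : MCS Ax x) (h : BProv Ax A) : A ∈ x :=
  hx.mem_of_prov (SProv.thm h)

theorem MCS.not_both (hx : MCS Ax x) (h1 : A ∈ x) (h2 : A.neg ∈ x) : False :=
  hx.1 (SProv.mp (SProv.hyp h2) (SProv.hyp h1))

theorem MCS.mp_mem (hx : MCS Ax x) (h1 : A.imp B ∈ x) (h2 : A ∈ x) : B ∈ x :=
  hx.mem_of_prov (SProv.mp (SProv.hyp h1) (SProv.hyp h2))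

theorem MCS.neg_mem_iff (hx : MCS Ax x) : A.neg ∈ x ↔ A ∉ x := by
  constructor
  · intro h hA; exact hx.not_both hA h
  · intro h; rcases hx.2 A with hA | hA
    · exact absurd hA h
    · exact hA

theorem MCS.imp_mem_iff (hx : MCS Ax x) : A.imp B ∈ x ↔ (A ∈ x → B ∈ x) := by
  constructor
  · exact fun h hA => hx.mp_mem h hA
  · intro h
    rcases hx.2 A with hA | hA
    · exact hx.mem_of_prov (SProv.mp (SProv.thm BProv.pl1) (SProv.hyp (h hA)))
    · apply hx.mem_of_prov
      apply SProv.ded (Γ := x) (B := A)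
      refine SProv.mp (SProv.thm (explosion B)) ?_
      exact SProv.mp (SProv.hyp (A := A.neg) (Set.mem_insert_of_mem _ hA))
        (SProv.hyp (Set.mem_insert _ _))

theorem MCS.eq_of_subset (hx : MCS Ax x) (hy : MCS Ax y) (h : x ⊆ y) : x = y := by
  apply Set.Subset.antisymm h
  intro A hA
  rcases hx.2 A with h' | h'
  · exact h'
  · exact absurd (h h') (fun hc => hy.not_both hA hc)

theorem lindenbaum {S : Set BForm} (h : Con Ax S) : ∃ M, MCS Ax M ∧ S ⊆ M := by
  obtain ⟨M, hSM, hM⟩ := zorn_subset_nonempty {T | Con Ax T ∧ S ⊆ T}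
    (fun c hc hchain hne => by
      refine ⟨⋃₀ c, ⟨?_, ?_⟩, fun s hs => Set.subset_sUnion_of_mem hs⟩
      · intro hbad
        obtain ⟨T, hT, hTp⟩ := SProv.chain hchain hne hbad
        exact (hc hT).1 hTp
      · obtain ⟨T, hT⟩ := hne
        exact (hc hT).2.trans (Set.subset_sUnion_of_mem hT))
    S ⟨h, Set.Subset.rfl⟩
  refine ⟨M, ⟨hM.1.1, ?_⟩, hM.1.2⟩
  intro A
  by_contra hcon
  push_neg at hcon
  obtain ⟨h1, h2⟩ := hcon
  have key : ∀ B : BForm, B ∉ M → ¬ Con Ax (insert B M) := by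
    intro B hB hconB
    have : insert B M ⊆ M := hM.2 ⟨hconB, hM.1.2.trans (Set.subset_insert _ _)⟩
      (Set.subset_insert _ _)
    exact hB (this (Set.mem_insert _ _))
  have k1 : SProv Ax M A.neg := SProv.ded (by
    by_contra hc; exact key A h1 hc)
  have k2 : SProv Ax M A.neg.neg := SProv.ded (by
    by_contra hc; exact key A.neg h2 hc)
  exact hM.1.1 (SProv.mp k2 k1)

/- ============== Part C2: canonical relations ============== -/

/-- The canonical relations. -/
def cR (i : Fin 2) (x y : Set BForm) : Prop := ∀ B : BForm, BForm.box i B ∈ x → B ∈ y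

theorem cR.refl (i : Fin 2) (hx : MCS LAx x) : cR i x x :=
  fun B hB => hx.mp_mem (hx.mem_of_thm (axT i B)) hB

theorem cR.trans {z : Set BForm} (i : Fin 2) (hx : MCS LAx x)
    (h1 : cR i x y) (h2 : cR i y z) : cR i x z :=
  fun B hB => h2 B (h1 _ (hx.mp_mem (hx.mem_of_thm (ax4 i B)) hB))

theorem box_lift' (i : Fin 2) {C : BForm}
    (h : SProv Ax {D | BForm.box i D ∈ x} C) : SProv Ax x (BForm.box i C) := by
  induction h with
  | hyp h => exact SProv.hyp h
  | thm h => exact SProv.thm (BProv.nec i h)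
  | mp _ _ ih1 ih2 => exact SProv.mp (SProv.mp (SProv.thm (BProv.kax i)) ih1) ih2

/-- Existence lemma. -/
theorem existence (i : Fin 2) (hx : MCS LAx x) {C : BForm} (hC : BForm.box i C ∉ x) :
    ∃ y, MCS LAx y ∧ cR i x y ∧ C ∉ y := by
  have hcon : Con LAx (insert C.neg {D | BForm.box i D ∈ x}) := by
    intro hbad
    have h1 : SProv LAx {D | BForm.box i D ∈ x} C :=
      SProv.mp (SProv.thm BProv.pl3) (SProv.ded hbad)
    exact hC (hx.mem_of_prov (box_lift' i h1))
  obtain ⟨y, hy, hsub⟩ := lindenbaum hcon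
  refine ⟨y, hy, fun B hB => hsub (Set.mem_insert_of_mem _ hB), fun hCy => ?_⟩
  exact hy.not_both hCy (hsub (Set.mem_insert _ _))

/-- Good sets : contain θ C for every C. -/
def Good (x : Set BForm) : Prop := ∀ C : BForm, theta C ∈ x

/-- Every MCS has a good canonical R₁-successor. -/
theorem good_successor (hx : MCS LAx x) : ∃ y, MCS LAx y ∧ cR 0 x y ∧ Good y := by
  have hcon : Con LAx ({D | BForm.box 0 D ∈ x} ∪ Set.range theta) := by
    intro hbad
    obtain ⟨l, hl, hpl⟩ := SProv.finite_list hbad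
    have hsplit : ∃ lθ : List BForm, ∀ B ∈ l, B ∈ {D | BForm.box 0 D ∈ x} ∨ B ∈ lθ.map theta := by
      clear hpl
      induction l with
      | nil => exact ⟨[], by simp⟩
      | cons B l ih =>
        obtain ⟨lθ, hlθ⟩ := ih (fun D hD => hl D (by simp [hD]))
        rcases hl B (by simp) with hB | hB
        · exact ⟨lθ, by
            intro D hD
            rcases List.mem_cons.1 hD with rfl | hD
            · exact Or.inl hB
            · exact hlθ D hD⟩
        · obtain ⟨C, hC⟩ := hB
          exact ⟨C :: lθ, by
            intro D hD
            rcases List.mem_cons.1 hD with rfl | hD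
            · exact Or.inr (by simp [hC])
            · rcases hlθ D hD with h | h
              · exact Or.inl h
              · exact Or.inr (by simp at h ⊢; tauto)⟩
    obtain ⟨lθ, hlθ⟩ := hsplit
    set Θ : BForm := conjL (lθ.map theta) with hΘ
    have hcut : SProv LAx (insert Θ {D | BForm.box 0 D ∈ x}) BForm.bot := by
      refine SProv.cut hpl ?_
      intro g hg
      rcases hlθ g hg with h | h
      · exact SProv.hyp (Set.mem_insert_of_mem _ h)
      · exact SProv.mp (SProv.thm (conj_proj h)) (SProv.hyp (Set.mem_insert _ _))
    have h2 : SProv LAx {D | BForm.box 0 D ∈ x} Θ.neg := SProv.ded hcut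
    have h3 : BForm.box 0 Θ.neg ∈ x := hx.mem_of_prov (box_lift' 0 h2)
    have h4 : BForm.dia 0 Θ ∈ x := hx.mem_of_thm (diaConj (by
      intro X hX
      obtain ⟨C, _, rfl⟩ := List.mem_map.1 hX
      exact axMKB C))
    exact hx.not_both h3 h4
  obtain ⟨y, hy, hsub⟩ := lindenbaum hcon
  exact ⟨y, hy, fun B hB => hsub (Set.mem_union_left _ hB),
    fun C => hsub (Set.mem_union_right _ ⟨C, rfl⟩)⟩

/-- A good MCS is a canonical R₁-endpoint. -/
theorem Good.endpoint (hx : MCS LAx x) (hg : Good x) (hy : MCS LAx y) (h : cR 0 x y) : y = x := by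
  refine (hx.eq_of_subset hy ?_).symm
  intro C hC
  have h1 : (BForm.dia 0 C).imp (BForm.box 0 C) ∈ x :=
    hx.mp_mem (hx.mem_of_thm (axT 1 _)) (hg C)
  have h2 : BForm.dia 0 C ∈ x := hx.mp_mem (hx.mem_of_thm (diaT' 0 C)) hC
  exact h _ (hx.mp_mem h1 h2)

/-- Goodness is hereditary along the canonical R₂. -/
theorem Good.heredR2 (hx : MCS LAx x) (hg : Good x) (h : cR 1 x y) : Good y :=
  fun C => h _ (hx.mp_mem (hx.mem_of_thm (ax4 1 _)) (hg C))

end FMP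
/- ============== Part D: the finite model ============== -/

namespace FMP

open BForm

/-- Subformula list. -/
def subL : BForm → List BForm
  | .var n => [.var n]
  | .bot => [.bot]
  | .imp A B => .imp A B :: (subL A ++ subL B)
  | .box i A => .box i A :: subL A

theorem self_mem_subL (A : BForm) : A ∈ subL A := by
  cases A <;> simp [subL]

theorem subL_closed {B C : BForm} (h : B ∈ subL C) : subL B ⊆ subL C := by
  induction C with
  | var n => simp [subL] at h; subst h; exact List.Subset.refl _
  | bot => simp [subL] at h; subst h; exact List.Subset.refl _
  | imp C1 C2 ih1 ih2 =>
    rcases List.mem_cons.1 h with rfl | h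
    · exact List.Subset.refl _
    · rcases List.mem_append.1 h with h | h
      · exact List.Subset.trans (ih1 h) (by intro D hD; simp [subL, hD])
      · exact List.Subset.trans (ih2 h) (by intro D hD; simp [subL, hD])
  | box i C ih =>
    rcases List.mem_cons.1 h with rfl | h
    · exact List.Subset.refl _
    · exact List.Subset.trans (ih h) (by intro D hD; simp [subL, hD])

section FiniteModel

variable (A₀ : BForm)

/-- The trace of an MCS. -/
def proj (x : Set BForm) : (BForm → Prop) × Prop :=
  (fun B => B ∈ x ∧ B ∈ subL A₀, Good x)

/-- The carrier of the finite model. -/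
def FW : Type := {p : (BForm → Prop) × Prop // ∃ x, MCS LAx x ∧ p = proj A₀ x}

theorem FW.finite : Finite (FW A₀) := by
  have hf : Finite {B // B ∈ subL A₀} := by
    have := (subL A₀).finite_toSet
    exact this.to_subtype
  apply Finite.of_injective
    (fun w : FW A₀ => ((fun b : {B // B ∈ subL A₀} => w.1.1 b.1, w.1.2) :
      ({B // B ∈ subL A₀} → Prop) × Prop))
  intro w w' heq
  obtain ⟨x, hx, hw⟩ := w.2
  obtain ⟨x', hx', hw'⟩ := w'.2
  apply Subtype.ext
  have h1 : w.1.2 = w'.1.2 := congrArg (fun p => p.2) heq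
  have h2 : ∀ B : BForm, w.1.1 B ↔ w'.1.1 B := by
    intro B
    by_cases hB : B ∈ subL A₀
    · exact iff_of_eq (congrFun (congrArg (fun p => p.1) heq) ⟨B, hB⟩)
    · rw [hw, hw']
      simp only [proj]
      constructor
      · rintro ⟨-, h⟩; exact absurd h hB
      · rintro ⟨-, h⟩; exact absurd h hB
  exact Prod.ext (funext fun B => propext (h2 B)) h1

/-- The relations of the finite model. -/
def Rfin (i : Fin 2) (w w' : FW A₀) : Prop :=
  (∀ B : BForm, BForm.box i B ∈ subL A₀ → w.1.1 (BForm.box i B) →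
    w'.1.1 (BForm.box i B) ∧ w'.1.1 B) ∧
  (w.1.2 → if i = 0 then w' = w else w'.1.2)

theorem Rfin.refl (i : Fin 2) (w : FW A₀) : Rfin A₀ i w w := by
  refine ⟨fun B _ hB => ⟨hB, ?_⟩, ?_⟩
  · obtain ⟨x, hx, hw⟩ := w.2
    rw [hw] at hB ⊢
    obtain ⟨h1, h2⟩ := hB
    exact ⟨hx.mp_mem (hx.mem_of_thm (axT i B)) h1,
      subL_closed h2 (by simp [subL, self_mem_subL])⟩
  · intro h; split
    · rfl
    · exact h

theorem Rfin.trans (i : Fin 2) {w1 w2 w3 : FW A₀}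
    (h12 : Rfin A₀ i w1 w2) (h23 : Rfin A₀ i w2 w3) : Rfin A₀ i w1 w3 := by
  refine ⟨fun B hBs hB => ?_, ?_⟩
  · obtain ⟨h1, _⟩ := h12.1 B hBs hB
    exact h23.1 B hBs h1
  · intro hε
    have h2 := h12.2 hε
    by_cases hi : i = 0
    · subst hi
      simp only [if_pos rfl] at h2 ⊢
      subst h2
      exact h23.2 hε
    · simp only [if_neg hi] at h2 ⊢
      have h3 := h23.2 h2
      simp only [if_neg hi] at h3
      exact h3

/-- The element of the finite model determined by an MCS. -/
def mkw (x : Set BForm) (hx : MCS LAx x) : FW A₀ := ⟨proj A₀ x, x, hx, rfl⟩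

theorem cR_Rfin {i : Fin 2} {x y : Set BForm} (hx : MCS LAx x) (hy : MCS LAx y)
    (h : cR i x y) : Rfin A₀ i (mkw A₀ x hx) (mkw A₀ y hy) := by
  constructor
  · intro B hBs hB
    obtain ⟨h1, -⟩ := hB
    have hb4 : BForm.box i B ∈ y := h _ (hx.mp_mem (hx.mem_of_thm (ax4 i B)) h1)
    refine ⟨⟨hb4, hBs⟩, ⟨h _ h1, subL_closed hBs (by simp [subL, self_mem_subL])⟩⟩
  · intro hg
    have hgx : Good x := hg
    by_cases hi : i = 0
    · subst hi
      simp only [if_pos rfl]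
      have : y = x := hgx.endpoint hx hy h
      subst this
      rfl
    · simp only [if_neg hi]
      have hi1 : i = 1 := by omega
      subst hi1
      exact hgx.heredR2 hx h

/-- The valuation of the finite model. -/
def Vfin : ℕ → FW A₀ → Prop := fun n w => w.1.1 (BForm.var n)

/-- Truth lemma. -/
theorem truth_lemma (C : BForm) (hC : C ∈ subL A₀) (x : Set BForm) (hx : MCS LAx x) :
    BSat (Rfin A₀) (Vfin A₀) (mkw A₀ x hx) C ↔ C ∈ x := by
  induction C generalizing x with
  | var n => simp [BSat, Vfin, mkw, proj, hC]
  | bot =>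
    simp only [BSat]
    constructor
    · intro h; exact h.elim
    · intro h; exact hx.1 (SProv.hyp h)
  | imp C1 C2 ih1 ih2 =>
    have hC1 : C1 ∈ subL A₀ := subL_closed hC (by simp [subL, self_mem_subL])
    have hC2 : C2 ∈ subL A₀ := subL_closed hC (by simp [subL, self_mem_subL])
    simp only [BSat]
    rw [ih1 hC1 x hx, ih2 hC2 x hx, hx.imp_mem_iff]
  | box i C ih =>
    have hCs : C ∈ subL A₀ := subL_closed hC (by simp [subL, self_mem_subL])
    simp only [BSat]
    constructor
    · intro h
      by_contra hbox
      obtain ⟨y, hy, hcr, hCy⟩ := existence i hx hbox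
      have hR : Rfin A₀ i (mkw A₀ x hx) (mkw A₀ y hy) := cR_Rfin A₀ hx hy hcr
      exact hCy ((ih hCs y hy).1 (h _ hR))
    · intro hbox w' hR
      obtain ⟨y, hy, hw⟩ := w'.2
      have hw' : w' = mkw A₀ y hy := Subtype.ext hw
      subst hw'
      refine (ih hCs y hy).2 ?_
      have := (hR.1 C hC ⟨hbox, hC⟩).2
      exact this.1

/-- The strong-∗ property of the finite frame. -/
theorem Rfin_star (w : FW A₀) :
    ∃ w', Rfin A₀ 0 w w' ∧ ∀ z, Rfin A₀ 1 w' z → ∀ v, Rfin A₀ 0 z v → v = z := by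
  obtain ⟨x, hx, hw⟩ := w.2
  have hw' : w = mkw A₀ x hx := Subtype.ext hw
  subst hw'
  obtain ⟨y, hy, hcr, hgy⟩ := good_successor hx
  refine ⟨mkw A₀ y hy, cR_Rfin A₀ hx hy hcr, ?_⟩
  intro z hz v hv
  have hzg : z.1.2 := by
    have := hz.2 hgy
    simpa using this
  have := hv.2 hzg
  simpa using this

end FiniteModel

end FMP
/- ============== Part E: soundness ============== -/

namespace FMP

theorem BSat_subst {W : Type} (R : Fin 2 → W → W → Prop) (V : ℕ → W → Prop) (σ : ℕ → BForm)
    (A : BForm) : ∀ x : W,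
    BSat R V x (A.subst σ) ↔ BSat R (fun n y => BSat R V y (σ n)) x A := by
  induction A with
  | var n => intro x; simp [BForm.subst, BSat]
  | bot => intro x; simp [BForm.subst, BSat]
  | imp A B ihA ihB =>
    intro x
    simp only [BForm.subst, BSat]
    exact imp_congr (ihA x) (ihB x)
  | box i A ih =>
    intro x
    simp only [BForm.subst, BSat]
    constructor
    · intro h y hy; exact (ih y).1 (h y hy)
    · intro h y hy; exact (ih y).2 (h y hy)

theorem MKSat_subst {W : Type} (R : W → W → Prop) (V : ℕ → W → Prop) (σ : ℕ → MForm)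
    (A : MForm) : ∀ x : W,
    MKSat R V x (A.subst σ) ↔ MKSat R (fun n y => MKSat R V y (σ n)) x A := by
  induction A with
  | var n => intro x; simp [MForm.subst, MKSat]
  | bot => intro x; simp [MForm.subst, MKSat]
  | imp A B ihA ihB =>
    intro x
    simp only [MForm.subst, MKSat]
    exact imp_congr (ihA x) (ihB x)
  | box A ih =>
    intro x
    simp only [MForm.subst, MKSat]
    constructor
    · intro h y hy; exact (ih y).1 (h y hy)
    · intro h y hy; exact (ih y).2 (h y hy)

theorem toB_sat {W : Type} (R : Fin 2 → W → W → Prop) (i : Fin 2) (V : ℕ → W → Prop)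
    (m : MForm) : ∀ x : W, BSat R V x (m.toB i) ↔ MKSat (R i) V x m := by
  induction m with
  | var n => intro x; simp [MForm.toB, BSat, MKSat]
  | bot => intro x; simp [MForm.toB, BSat, MKSat]
  | imp A B ihA ihB =>
    intro x
    simp only [MForm.toB, BSat, MKSat]
    exact imp_congr (ihA x) (ihB x)
  | box A ih =>
    intro x
    simp only [MForm.toB, BSat, MKSat]
    constructor
    · intro h y hy; exact (ih y).1 (h y hy)
    · intro h y hy; exact (ih y).2 (h y hy)

theorem msound {W : Type} (R : W → W → Prop) {MAx : Set MForm}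
    (hax : ∀ m ∈ MAx, MKValid R m) {m : MForm} (h : MProv MAx m) : MKValid R m := by
  induction h with
  | axm h => exact hax _ h
  | pl1 => intro V x; exact fun a _ => a
  | pl2 => intro V x; exact fun h1 h2 ha => h1 ha (h2 ha)
  | pl3 => intro V x; exact fun h => Classical.byContradiction (fun hc => h hc)
  | kax => intro V x; exact fun h1 h2 y hy => h1 y hy (h2 y hy)
  | mp _ _ ih1 ih2 => intro V x; exact ih1 V x (ih2 V x)
  | nec _ ih => intro V x y _; exact ih V y
  | subst σ _ ih => intro V x; rw [MKSat_subst]; exact ih _ x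

theorem S4Ax_valid {W : Type} (R : W → W → Prop) (hrefl : ∀ x, R x x)
    (htrans : ∀ x y z, R x y → R y z → R x z) :
    ∀ m ∈ S4Ax, MKValid R m := by
  intro m hm
  rcases hm with rfl | hm
  · intro V x
    exact fun h => h x (hrefl x)
  · rcases hm with rfl
    intro V x
    exact fun h y hxy z hyz => h z (htrans _ _ _ hxy hyz)

theorem McK_valid {W : Type} (R : W → W → Prop)
    (hend : ∀ x, ∃ y, R x y ∧ ∀ z, R y z → z = y) :
    MKValid R McKM := by
  intro V x
  intro h hc
  obtain ⟨y, hxy, hy⟩ := hend x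
  apply hc y hxy
  have hpy : V 0 y := by
    by_contra hny
    exact (h y hxy) (fun z hz => by rw [hy z hz]; exact fun hv => hny hv)
  intro z hz
  rw [hy z hz]
  exact hpy

theorem bsound {W : Type} (R : Fin 2 → W → W → Prop)
    (hrefl : ∀ i x, R i x x)
    (htrans : ∀ i x y z, R i x y → R i y z → R i x z)
    (hstar : ∀ x, ∃ y, R 0 x y ∧ ∀ z, R 1 y z → ∀ v, R 0 z v → v = z)
    {A : BForm} (h : BProv LAx A) : BValid R A := by
  have hend0 : ∀ x, ∃ y, R 0 x y ∧ ∀ z, R 0 y z → z = y := by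
    intro x
    obtain ⟨y, h1, h2⟩ := hstar x
    exact ⟨y, h1, fun z hz => h2 y (hrefl 1 y) z hz⟩
  induction h with
  | axm h =>
    rcases h with h | h
    · rcases h with ⟨m, hm, rfl⟩ | ⟨m, hm, rfl⟩
      · intro V x
        rw [toB_sat]
        refine msound (R 0) ?_ hm V x
        intro m' hm'
        rcases hm' with hm' | hm'
        · exact S4Ax_valid (R 0) (hrefl 0) (htrans 0) m' hm'
        · rcases hm' with rfl
          exact McK_valid (R 0) hend0
      · intro V x
        rw [toB_sat]
        exact msound (R 1) (S4Ax_valid (R 1) (hrefl 1) (htrans 1)) hm V x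
    · rcases h with rfl
      intro V x hc
      obtain ⟨y, hxy, hy⟩ := hstar x
      apply hc y hxy
      intro z hz hdz
      have hpz : V 0 z := by
        by_contra hn
        exact hdz (fun u hu => by rw [hy z hz u hu]; exact fun hv => hn hv)
      intro u hu
      rw [hy z hz u hu]
      exact hpz
  | pl1 => intro V x; exact fun a _ => a
  | pl2 => intro V x; exact fun h1 h2 ha => h1 ha (h2 ha)
  | pl3 => intro V x; exact fun h => Classical.byContradiction (fun hc => h hc)
  | kax i => intro V x; exact fun h1 h2 y hy => h1 y hy (h2 y hy)
  | mp _ _ ih1 ih2 => intro V x; exact ih1 V x (ih2 V x)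
  | nec i _ ih => intro V x y _; exact ih V y
  | subst σ _ ih => intro V x; rw [BSat_subst]; exact ih _ x

end FMP
/-- L = S4.1 ∗ S4 + ◇₁□₂(◇₁p → □₁p) has the finite model property:
it is the logic of the class of finite Kripke 2-frames validating L. -/
theorem LL_fmp :
    LL = {A : BForm | ∀ (W : Type) (R1 R2 : W → W → Prop), Nonempty W → Finite W →
      (∀ B ∈ LL, BValid ![R1, R2] B) → BValid ![R1, R2] A} := by
  ext A
  simp only [Set.mem_setOf_eq]
  constructor
  · intro hA W R1 R2 _ _ hval
    exact hval A hA
  · intro hA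
    by_contra hnA
    have hnA' : ¬ BProv FMP.LAx A := hnA
    have hcon : FMP.Con FMP.LAx {A.neg} := by
      intro hbad
      have h1 : FMP.SProv FMP.LAx ∅ (A.neg.imp BForm.bot) :=
        FMP.SProv.ded (hbad.mono (by
          intro B hB
          rcases hB with rfl
          exact Set.mem_insert _ _))
      exact hnA' (BProv.mp BProv.pl3 h1.toBProv)
    obtain ⟨x₀, hx₀, hsub⟩ := FMP.lindenbaum hcon
    have hAx₀ : A ∉ x₀ := fun h => hx₀.not_both h (hsub rfl)
    have hfin : Finite (FMP.FW A) := FMP.FW.finite A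
    have hne : Nonempty (FMP.FW A) := ⟨FMP.mkw A x₀ hx₀⟩
    have hvec : ![FMP.Rfin A 0, FMP.Rfin A 1] = FMP.Rfin A := by
      funext i
      fin_cases i <;> rfl
    have hval : ∀ B ∈ LL, BValid ![FMP.Rfin A 0, FMP.Rfin A 1] B := by
      intro B hB
      rw [hvec]
      exact FMP.bsound (FMP.Rfin A) (FMP.Rfin.refl A)
        (fun i _ _ _ h1 h2 => FMP.Rfin.trans A i h1 h2) (FMP.Rfin_star A) hB
    have hv := hA (FMP.FW A) (FMP.Rfin A 0) (FMP.Rfin A 1) hne hfin hval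
    rw [hvec] at hv
    have hsat := hv (FMP.Vfin A) (FMP.mkw A x₀ hx₀)
    exact hAx₀ ((FMP.truth_lemma A A (FMP.self_mem_subL A) x₀ hx₀).1 hsat)
end

section
/- The logic of the Kripke 2-frame 𝕋_{2,2+2} equals L; that is, a bimodal formula is valid in 𝕋_{2,2+2} if and only if it belongs to L = S4.1 ∗ S4 + ◇₁□₂(◇₁p → □₁p). -/
/- ======================================================================
   Auxiliary development
   ====================================================================== -/

instance : Inhabited BForm := ⟨.bot⟩

namespace BP

open BForm

variable {Ax : Set BForm}

local notation "⊩" A => BProv Ax A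

theorem impId (A : BForm) : ⊩ A.imp A := by
  have h1 := @BProv.pl2 Ax A (A.imp A) A
  have h2 := @BProv.pl1 Ax A (A.imp A)
  have h3 := @BProv.pl1 Ax A A
  exact (h1.mp h2).mp h3

theorem constImp {A B : BForm} (h : ⊩ B) : ⊩ A.imp B := BProv.pl1.mp h

theorem mp2 {A B C : BForm} (h1 : ⊩ A.imp (B.imp C)) (h2 : ⊩ A.imp B) : ⊩ A.imp C :=
  (BProv.pl2.mp h1).mp h2

theorem comp {A B C : BForm} (h1 : ⊩ A.imp B) (h2 : ⊩ B.imp C) : ⊩ A.imp C :=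
  mp2 (constImp h2) h1

/-- ⊢ (B→C)→((A→B)→(A→C)) -/
theorem compThm (A B C : BForm) : ⊩ (B.imp C).imp ((A.imp B).imp (A.imp C)) :=
  comp (BProv.pl1 (A := B.imp C) (B := A)) BProv.pl2

theorem metaSwap {A B C : BForm} (h : ⊩ A.imp (B.imp C)) : ⊩ B.imp (A.imp C) :=
  comp BProv.pl1 (BProv.pl2.mp h)

/-- ⊢ (A→(B→C))→(B→(A→C)) -/
theorem swapThm (A B C : BForm) : ⊩ (A.imp (B.imp C)).imp (B.imp (A.imp C)) :=
  mp2 (comp BProv.pl2 (compThm B (A.imp B) (A.imp C))) (constImp BProv.pl1)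

/-- compose in the consequent: from ⊢X→(Y→Z) and ⊢Z→W get ⊢X→(Y→W) -/
theorem compCons {X Y Z W : BForm} (h : ⊩ X.imp (Y.imp Z)) (g : ⊩ Z.imp W) :
    ⊩ X.imp (Y.imp W) :=
  comp h ((compThm Y Z W).mp g)

/-- precompose in the consequent: from ⊢X→(Y→Z) and ⊢W→Y get ⊢X→(W→Z) -/
theorem preCons {X Y Z W : BForm} (h : ⊩ X.imp (Y.imp Z)) (g : ⊩ W.imp Y) :
    ⊩ X.imp (W.imp Z) :=
  comp h ((metaSwap (compThm W Y Z)).mp g)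

theorem dne (A : BForm) : ⊩ A.neg.neg.imp A := BProv.pl3

theorem dni (A : BForm) : ⊩ A.imp A.neg.neg := metaSwap (impId A.neg)

theorem efq (A : BForm) : ⊩ BForm.bot.imp A := comp BProv.pl1 BProv.pl3

/-- ⊢ (A→B)→(¬B→¬A) -/
theorem contrap1 (A B : BForm) : ⊩ (A.imp B).imp (B.neg.imp A.neg) :=
  metaSwap (compThm A B BForm.bot)

/-- ⊢ (¬B→¬A)→(A→B) -/
theorem contrap2 (A B : BForm) : ⊩ (B.neg.imp A.neg).imp (A.imp B) := by
  have h1 : ⊩ (B.neg.imp A.neg).imp (A.neg.neg.imp B.neg.neg) := contrap1 _ _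
  have h2 : ⊩ (B.neg.imp A.neg).imp (A.imp B.neg.neg) :=
    preCons h1 (dni A)
  exact compCons h2 (dne B)

/-- conjunction -/
def conj (A B : BForm) : BForm := (A.imp B.neg).neg

theorem andIntro (A B : BForm) : ⊩ A.imp (B.imp (conj A B)) := by
  have h1 : ⊩ (A.imp B.neg).imp (A.imp (B.imp BForm.bot)) := impId _
  have h2 : ⊩ A.imp ((A.imp B.neg).imp (B.imp BForm.bot)) := metaSwap h1
  exact comp h2 (swapThm (A.imp B.neg) B BForm.bot)

theorem andLeft (A B : BForm) : ⊩ (conj A B).imp A := by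
  have h1 : ⊩ A.neg.imp (A.imp B.neg) :=
    comp (impId A.neg) ((BProv.pl2).mp (constImp (efq B.neg)))
  exact (contrap2 (conj A B) A).mp (comp h1 (dni (A.imp B.neg)))

theorem andRight (A B : BForm) : ⊩ (conj A B).imp B := by
  have h1 : ⊩ B.neg.imp (A.imp B.neg) := BProv.pl1
  exact (contrap2 (conj A B) B).mp (comp h1 (dni (A.imp B.neg)))

theorem andComm (A B : BForm) : ⊩ (conj A B).imp (conj B A) := by
  have h1 : ⊩ (conj A B).imp (A.imp (conj B A)) :=
    comp (andRight A B) (andIntro B A)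
  exact mp2 h1 (andLeft A B)


/- ===== list implications and finite-set derivability ===== -/

/-- `lImp [A1,...,An] C = A1 → (A2 → ... (An → C))` -/
def lImp : List BForm → BForm → BForm
  | [], C => C
  | A :: t, C => A.imp (lImp t C)

theorem lImpLift {C : BForm} (l : List BForm) (h : ⊩ C) : ⊩ lImp l C := by
  induction l with
  | nil => exact h
  | cons A t ih => exact constImp ih

/-- ⊢ C → lImp l C -/
theorem lImpLiftThm (l : List BForm) (C : BForm) : ⊩ C.imp (lImp l C) := by
  induction l with
  | nil => exact impId C
  | cons A t ih => exact comp ih BProv.pl1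

/-- ⊢ (lImp l (A→B)) → (lImp l A → lImp l B) -/
theorem lImpPl2 (l : List BForm) (A B : BForm) :
    ⊩ (lImp l (A.imp B)).imp ((lImp l A).imp (lImp l B)) := by
  induction l with
  | nil => exact impId _
  | cons X t ih =>
      have h1 : ⊩ (X.imp (lImp t (A.imp B))).imp
          (X.imp ((lImp t A).imp (lImp t B))) := (compThm X _ _).mp ih
      exact comp h1 BProv.pl2

/-- ⊢ lImp l C → lImp (l ++ l') C -/
theorem lImpAppL (l l' : List BForm) (C : BForm) :
    ⊩ (lImp l C).imp (lImp (l ++ l') C) := by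
  induction l with
  | nil => exact lImpLiftThm l' C
  | cons A t ih => exact (compThm A _ _).mp ih

/-- ⊢ lImp l' C → lImp (l ++ l') C -/
theorem lImpAppR (l l' : List BForm) (C : BForm) :
    ⊩ (lImp l' C).imp (lImp (l ++ l') C) := by
  induction l with
  | nil => exact impId _
  | cons A t ih => exact comp ih BProv.pl1

/-- ⊢ (A → lImp t C) → lImp t (A → C) -/
theorem lImpExch (t : List BForm) (A C : BForm) :
    ⊩ (A.imp (lImp t C)).imp (lImp t (A.imp C)) := by
  induction t with
  | nil => exact impId _
  | cons X t' ih =>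
      have h1 : ⊩ (A.imp (X.imp (lImp t' C))).imp (X.imp (A.imp (lImp t' C))) :=
        swapThm _ _ _
      exact comp h1 ((compThm X _ _).mp ih)

/-- ⊢ (lImp l (A→C)) → (A → lImp l C) -/
theorem lImpPull (l : List BForm) (A C : BForm) :
    ⊩ (lImp l (A.imp C)).imp (A.imp (lImp l C)) := by
  induction l with
  | nil => exact impId _
  | cons X t ih =>
      have h1 : ⊩ (X.imp (lImp t (A.imp C))).imp (X.imp (A.imp (lImp t C))) :=
        (compThm X _ _).mp ih
      exact comp h1 (swapThm _ _ _)

/-- compose inside a list implication -/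
theorem lImpCons {C C' : BForm} (l : List BForm) (h : ⊩ C.imp C') :
    ⊩ (lImp l C).imp (lImp l C') := by
  induction l with
  | nil => exact h
  | cons A t ih => exact (compThm A _ _).mp ih

/-- finite derivability from a set of hypotheses -/
def SDer (Ax : Set BForm) (S : Set BForm) (C : BForm) : Prop :=
  ∃ l : List BForm, (∀ A ∈ l, A ∈ S) ∧ BProv Ax (lImp l C)

theorem SDer.ofThm {S : Set BForm} {C : BForm} (h : ⊩ C) : SDer Ax S C :=
  ⟨[], by simp, h⟩

theorem SDer.ofMem {S : Set BForm} {C : BForm} (h : C ∈ S) : SDer Ax S C :=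
  ⟨[C], by simp [h], by show ⊩ C.imp (lImp [] C); exact impId C⟩

theorem SDer.mono {S T : Set BForm} {C : BForm} (hST : S ⊆ T) (h : SDer Ax S C) :
    SDer Ax T C := by
  obtain ⟨l, hl, hp⟩ := h
  exact ⟨l, fun A hA => hST (hl A hA), hp⟩

theorem SDer.mp {S : Set BForm} {A B : BForm}
    (h1 : SDer Ax S (A.imp B)) (h2 : SDer Ax S A) : SDer Ax S B := by
  obtain ⟨l1, hl1, hp1⟩ := h1
  obtain ⟨l2, hl2, hp2⟩ := h2
  refine ⟨l1 ++ l2, ?_, ?_⟩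
  · intro X hX
    rcases List.mem_append.1 hX with h | h
    · exact hl1 X h
    · exact hl2 X h
  · have g1 : ⊩ lImp (l1 ++ l2) (A.imp B) := (lImpAppL l1 l2 _).mp hp1
    have g2 : ⊩ lImp (l1 ++ l2) A := (lImpAppR l1 l2 _).mp hp2
    exact ((lImpPl2 (l1 ++ l2) A B).mp g1).mp g2

theorem SDer.liftThm {S : Set BForm} {A B : BForm} (h : ⊩ A.imp B)
    (h2 : SDer Ax S A) : SDer Ax S B := (SDer.ofThm h).mp h2

/-- contraction -/
theorem contractThm (B C : BForm) : ⊩ (B.imp (B.imp C)).imp (B.imp C) :=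
  (metaSwap (BProv.pl2 (A := B) (B := B) (C := C))).mp (impId B)

/-- Deduction theorem. -/
theorem deduction {S : Set BForm} {B C : BForm}
    (h : SDer Ax (insert B S) C) : SDer Ax S (B.imp C) := by
  obtain ⟨l, hl, hp⟩ := h
  induction l generalizing C with
  | nil => exact SDer.ofThm (constImp hp)
  | cons A t ih =>
      have hp' : ⊩ lImp t (A.imp C) := (lImpExch t A _).mp hp
      have hder : SDer Ax S (B.imp (A.imp C)) :=
        ih (fun X hX => hl X (List.mem_cons_of_mem A hX)) hp'
      rcases hl A (List.mem_cons_self) with hA | hA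
      · subst hA
        exact hder.liftThm (contractThm A C) -- B = A case
      · have hswap : SDer Ax S (A.imp (B.imp C)) :=
          hder.liftThm (swapThm B A C)
        exact hswap.mp (SDer.ofMem hA)

/-- consistency -/
def Con (Ax : Set BForm) (S : Set BForm) : Prop := ¬ SDer Ax S BForm.bot

theorem negOfIncon {S : Set BForm} {B : BForm}
    (h : ¬ Con Ax (insert B S)) : SDer Ax S B.neg := by
  have := Classical.not_not.1 (fun hc => h hc)
  exact deduction this


/- ===== generic modal lemmas ===== -/

theorem boxMono {A B : BForm} (i : Fin 2) (h : ⊩ A.imp B) :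
    ⊩ (BForm.box i A).imp (BForm.box i B) :=
  (BProv.kax i).mp (BProv.nec i h)

theorem diaMono {A B : BForm} (i : Fin 2) (h : ⊩ A.imp B) :
    ⊩ (BForm.dia i A).imp (BForm.dia i B) :=
  (contrap1 _ _).mp (boxMono i ((contrap1 A B).mp h))

/-- ⊢ □(lImp l B) → lImp (map □ l) (□B) -/
theorem lImpBox (i : Fin 2) (l : List BForm) (B : BForm) :
    ⊩ (BForm.box i (lImp l B)).imp (lImp (l.map (BForm.box i)) (BForm.box i B)) := by
  induction l with
  | nil => exact impId _
  | cons A t ih =>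
      have h1 : ⊩ (BForm.box i (A.imp (lImp t B))).imp
          ((BForm.box i A).imp (BForm.box i (lImp t B))) := BProv.kax i
      exact compCons h1 ih

/-- ⊢ □X → (◇Y → ◇(X ∧ Y)) -/
theorem boxDiaAnd (i : Fin 2) (X Y : BForm) :
    ⊩ (BForm.box i X).imp ((BForm.dia i Y).imp (BForm.dia i (conj X Y))) := by
  have h1 : ⊩ X.imp ((conj X Y).neg.imp Y.neg) :=
    comp (andIntro X Y) (contrap1 Y (conj X Y))
  have h2 : ⊩ (BForm.box i X).imp
      ((BForm.box i ((conj X Y).neg)).imp (BForm.box i Y.neg)) :=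
    comp (boxMono i h1) (BProv.kax i)
  exact comp h2 (contrap1 _ _)

/- ===== maximal consistent sets ===== -/

def MCS (Ax : Set BForm) (Γ : Set BForm) : Prop :=
  Con Ax Γ ∧ ∀ A : BForm, A ∈ Γ ∨ A.neg ∈ Γ

theorem MCS.memOfSDer {Γ : Set BForm} (h : MCS Ax Γ) {A : BForm}
    (hd : SDer Ax Γ A) : A ∈ Γ := by
  rcases h.2 A with hA | hA
  · exact hA
  · exact absurd ((SDer.ofMem hA).mp hd) h.1

theorem MCS.thmMem {Γ : Set BForm} (h : MCS Ax Γ) {A : BForm} (ht : ⊩ A) : A ∈ Γ :=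
  h.memOfSDer (SDer.ofThm ht)

theorem MCS.mpMem {Γ : Set BForm} (h : MCS Ax Γ) {A B : BForm}
    (h1 : A.imp B ∈ Γ) (h2 : A ∈ Γ) : B ∈ Γ :=
  h.memOfSDer ((SDer.ofMem h1).mp (SDer.ofMem h2))

theorem MCS.notMem {Γ : Set BForm} (h : MCS Ax Γ) {A : BForm} :
    A.neg ∈ Γ ↔ A ∉ Γ := by
  constructor
  · intro h1 h2
    exact h.1 ((SDer.ofMem h1).mp (SDer.ofMem h2))
  · intro h1
    rcases h.2 A with hA | hA
    · exact absurd hA h1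
    · exact hA

theorem MCS.impMem {Γ : Set BForm} (h : MCS Ax Γ) {A B : BForm} :
    A.imp B ∈ Γ ↔ (A ∈ Γ → B ∈ Γ) := by
  constructor
  · intro h1 h2; exact h.mpMem h1 h2
  · intro h1
    by_cases hA : A ∈ Γ
    · exact h.memOfSDer ((SDer.ofThm BProv.pl1).mp (SDer.ofMem (h1 hA)))
    · have hA' : A.neg ∈ Γ := h.notMem.2 hA
      have : ⊩ A.neg.imp (A.imp B) := BProv.pl2.mp (constImp (efq B))
      exact h.memOfSDer ((SDer.ofThm this).mp (SDer.ofMem hA'))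

theorem MCS.botNotMem {Γ : Set BForm} (h : MCS Ax Γ) : BForm.bot ∉ Γ := by
  intro hb; exact h.1 (SDer.ofMem hb)

/-- Lindenbaum's lemma. -/
theorem lindenbaum {S : Set BForm} (h : Con Ax S) :
    ∃ Γ : Set BForm, S ⊆ Γ ∧ MCS Ax Γ := by
  have chainfin : ∀ (c : Set (Set BForm)), IsChain (· ⊆ ·) c → c.Nonempty →
      ∀ l : List BForm, (∀ A ∈ l, A ∈ ⋃₀ c) → ∃ T ∈ c, ∀ A ∈ l, A ∈ T := by
    intro c hchain hne l
    induction l with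
    | nil => intro _; obtain ⟨T, hT⟩ := hne; exact ⟨T, hT, by simp⟩
    | cons A t ih =>
        intro hl
        obtain ⟨T, hTc, hTall⟩ := ih (fun X hX => hl X (List.mem_cons_of_mem A hX))
        obtain ⟨U, hUc, hAU⟩ : ∃ U ∈ c, A ∈ U := by
          have := hl A (List.mem_cons_self)
          simpa [Set.mem_sUnion] using this
        rcases eq_or_ne T U with rfl | hTU
        · exact ⟨T, hTc, fun X hX => by
            rcases List.mem_cons.1 hX with rfl | hX
            · exact hAU
            · exact hTall X hX⟩
        · rcases hchain hTc hUc hTU with hsub | hsub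
          · exact ⟨U, hUc, fun X hX => by
              rcases List.mem_cons.1 hX with rfl | hX
              · exact hAU
              · exact hsub (hTall X hX)⟩
          · exact ⟨T, hTc, fun X hX => by
              rcases List.mem_cons.1 hX with rfl | hX
              · exact hsub hAU
              · exact hTall X hX⟩
  obtain ⟨Γ, hSΓ, hmax⟩ := zorn_subset_nonempty {T | S ⊆ T ∧ Con Ax T}
    (fun c hc hchain hne => by
      refine ⟨⋃₀ c, ⟨?_, ?_⟩, fun T hT => Set.subset_sUnion_of_mem hT⟩
      · obtain ⟨T, hT⟩ := hne
        exact (hc hT).1.trans (Set.subset_sUnion_of_mem hT)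
      · rintro ⟨l, hl, hp⟩
        obtain ⟨T, hTc, hTall⟩ := chainfin c hchain hne l hl
        exact (hc hTc).2 ⟨l, hTall, hp⟩) S ⟨Set.Subset.rfl, h⟩
  refine ⟨Γ, hmax.1.1, hmax.1.2, fun A => ?_⟩
  by_contra hcon
  push_neg at hcon
  have h1 : Con Ax (insert A Γ) ∨ Con Ax (insert A.neg Γ) := by
    by_contra hc
    push_neg at hc
    have d1 : SDer Ax Γ A.neg := negOfIncon hc.1
    have d2 : SDer Ax Γ A.neg.neg := negOfIncon hc.2
    exact hmax.1.2 (d2.mp d1)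
  rcases h1 with hcon1 | hcon1
  · have hsub : insert A Γ ⊆ Γ :=
      hmax.2 ⟨hmax.1.1.trans (Set.subset_insert _ _), hcon1⟩ (Set.subset_insert _ _)
    exact hcon.1 (hsub (Set.mem_insert A Γ))
  · have hsub : insert A.neg Γ ⊆ Γ :=
      hmax.2 ⟨hmax.1.1.trans (Set.subset_insert _ _), hcon1⟩ (Set.subset_insert _ _)
    exact hcon.2 (hsub (Set.mem_insert A.neg Γ))

end BP

/- ===== the logic LL: specific theorems ===== -/

namespace BP

open BForm

/-- the axioms of L -/
def LLAx : Set BForm := FusionAx ∪ {MKB}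

def GB (A : BForm) : BForm := BForm.box 1 ((BForm.dia 0 A).imp (BForm.box 0 A))

def top : BForm := BForm.bot.imp BForm.bot

def bigAnd : List BForm → BForm
  | [] => top
  | A :: t => conj A (bigAnd t)

theorem fusionThm0 {A : MForm} (h : MProv (S4Ax ∪ {McKM}) A) :
    BProv LLAx (A.toB 0) :=
  BProv.axm (Or.inl (Or.inl ⟨A, h, rfl⟩))

theorem fusionThm1 {A : MForm} (h : MProv S4Ax A) :
    BProv LLAx (A.toB 1) :=
  BProv.axm (Or.inl (Or.inr ⟨A, h, rfl⟩))

theorem s4axT : MProv S4Ax ((MForm.box pM).imp pM) :=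
  MProv.axm (Or.inl rfl)

theorem s4axFour : MProv S4Ax ((MForm.box pM).imp (MForm.box (MForm.box pM))) :=
  MProv.axm (Or.inr rfl)

theorem s41axT : MProv (S4Ax ∪ {McKM}) ((MForm.box pM).imp pM) :=
  MProv.axm (Or.inl (Or.inl rfl))

theorem s41axFour : MProv (S4Ax ∪ {McKM}) ((MForm.box pM).imp (MForm.box (MForm.box pM))) :=
  MProv.axm (Or.inl (Or.inr rfl))

theorem axT (i : Fin 2) (A : BForm) : BProv LLAx ((BForm.box i A).imp A) := by
  fin_cases i
  · exact BProv.subst (fun _ => A) (fusionThm0 s41axT)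
  · exact BProv.subst (fun _ => A) (fusionThm1 s4axT)

theorem axFour (i : Fin 2) (A : BForm) :
    BProv LLAx ((BForm.box i A).imp (BForm.box i (BForm.box i A))) := by
  fin_cases i
  · exact BProv.subst (fun _ => A) (fusionThm0 s41axFour)
  · exact BProv.subst (fun _ => A) (fusionThm1 s4axFour)

theorem axMcK0 (A : BForm) :
    BProv LLAx ((BForm.box 0 (BForm.dia 0 A)).imp (BForm.dia 0 (BForm.box 0 A))) :=
  BProv.subst (fun _ => A)
    (fusionThm0 (MProv.axm (Set.mem_union_right _ rfl)))

theorem mkbInst (A : BForm) : BProv LLAx (BForm.dia 0 (GB A)) := by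
  have h : BProv LLAx MKB := BProv.axm (Or.inr rfl)
  exact BProv.subst (fun _ => A) h

theorem diaT (i : Fin 2) (A : BForm) : BProv LLAx (A.imp (BForm.dia i A)) :=
  comp (dni A) ((contrap1 _ _).mp (axT i A.neg))

theorem dia4 (i : Fin 2) (A : BForm) :
    BProv LLAx ((BForm.dia i (BForm.dia i A)).imp (BForm.dia i A)) := by
  have h1 : BProv LLAx ((BForm.box i A.neg).imp (BForm.box i ((BForm.dia i A).neg))) :=
    comp (axFour i A.neg) (boxMono i (dni (BForm.box i A.neg)))
  exact (contrap1 _ _).mp h1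

/-- generalized MKB: ⊢ ◇₁(G(B₁) ∧ ... ∧ G(Bₙ)) -/
theorem mgen (bs : List BForm) : BProv LLAx (BForm.dia 0 (bigAnd (bs.map GB))) := by
  induction bs with
  | nil => exact (diaT 0 top).mp (impId BForm.bot)
  | cons B bs ih =>
      set C := bigAnd (bs.map GB) with hC
      set G := GB B with hG
      have h1 : BProv LLAx (BForm.dia 0 (BForm.box 0 C)) :=
        (axMcK0 C).mp (BProv.nec 0 ih)
      have h2 : BProv LLAx (BForm.box 0 (BForm.dia 0 G)) :=
        BProv.nec 0 (mkbInst B)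
      have h3 : BProv LLAx (BForm.dia 0 (conj (BForm.dia 0 G) (BForm.box 0 C))) :=
        ((boxDiaAnd 0 (BForm.dia 0 G) (BForm.box 0 C)).mp h2).mp h1
      have h4 : BProv LLAx
          ((conj (BForm.dia 0 G) (BForm.box 0 C)).imp (BForm.dia 0 (conj G C))) := by
        have pa := andRight (Ax := LLAx) (BForm.dia 0 G) (BForm.box 0 C)
        have pb := andLeft (Ax := LLAx) (BForm.dia 0 G) (BForm.box 0 C)
        have q := boxDiaAnd (Ax := LLAx) 0 C G
        have s := mp2 (comp pa q) pb
        exact comp s (diaMono 0 (andComm C G))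
      have h5 : BProv LLAx (BForm.dia 0 (BForm.dia 0 (conj G C))) :=
        (diaMono 0 h4).mp h3
      exact (dia4 0 _).mp h5


/- ===== canonical model machinery ===== -/

variable {Ax : Set BForm}

/-- generic: split a derivation over a union of hypothesis sets -/
theorem splitDer (S1 S2 : Set BForm) :
    ∀ (l : List BForm) (C : BForm), (∀ A ∈ l, A ∈ S1 ∪ S2) → BProv Ax (lImp l C) →
      ∃ l2 : List BForm, (∀ A ∈ l2, A ∈ S2) ∧ SDer Ax S1 (lImp l2 C) := by
  intro l
  induction l with
  | nil => intro C _ hp; exact ⟨[], by simp, SDer.ofThm hp⟩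
  | cons A t ih =>
      intro C hl hp
      have hp' : BProv Ax (lImp t (A.imp C)) := (lImpExch t A C).mp hp
      obtain ⟨l2, hl2, hd⟩ := ih (A.imp C) (fun X hX => hl X (List.mem_cons_of_mem A hX)) hp'
      have hd' : SDer Ax S1 (A.imp (lImp l2 C)) := hd.liftThm (lImpPull l2 A C)
      rcases hl A (List.mem_cons_self) with hA | hA
      · exact ⟨l2, hl2, hd'.mp (SDer.ofMem hA)⟩
      · exact ⟨A :: l2, fun X hX => by
          rcases List.mem_cons.1 hX with rfl | hX
          · exact hA
          · exact hl2 X hX, hd'⟩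

/-- ⊢ (lImp l X) → (bigAnd l → X) -/
theorem lImpBigAnd (l : List BForm) (X : BForm) :
    BProv Ax ((lImp l X).imp ((bigAnd l).imp X)) := by
  induction l with
  | nil => exact BProv.pl1
  | cons A t ih =>
      set P := lImp t X
      set T := bigAnd t
      have c1 : BProv Ax ((A.imp P).imp ((conj A T).imp P)) :=
        (metaSwap (compThm (conj A T) A P)).mp (andLeft A T)
      have c2 : BProv Ax (((conj A T).imp P).imp ((conj A T).imp (T.imp X))) :=
        (compThm _ _ _).mp ih
      have c3 : BProv Ax (((conj A T).imp (T.imp X)).imp ((conj A T).imp X)) :=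
        (metaSwap BProv.pl2).mp (andRight A T)
      exact comp c1 (comp c2 c3)

/-- canonical relation -/
def CRel (i : Fin 2) (Γ Δ : Set BForm) : Prop := ∀ B : BForm, BForm.box i B ∈ Γ → B ∈ Δ

/-- the box-content of a set -/
def bcont (i : Fin 2) (Γ : Set BForm) : Set BForm := {C | BForm.box i C ∈ Γ}

theorem crelRefl {Γ : Set BForm} (h : MCS LLAx Γ) (i : Fin 2) : CRel i Γ Γ :=
  fun B hB => h.mpMem (h.thmMem (axT i B)) hB

theorem crelTrans {Γ Δ Θ : Set BForm} (hΓ : MCS LLAx Γ) (i : Fin 2)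
    (h1 : CRel i Γ Δ) (h2 : CRel i Δ Θ) : CRel i Γ Θ := fun B hB =>
  h2 B (h1 _ (hΓ.mpMem (hΓ.thmMem (axFour i B)) hB))

theorem diaMemIff {Γ : Set BForm} (h : MCS LLAx Γ) (i : Fin 2) (B : BForm) :
    BForm.dia i B ∈ Γ ↔ BForm.box i B.neg ∉ Γ := h.notMem

theorem notBoxDia {Γ : Set BForm} (h : MCS LLAx Γ) {i : Fin 2} {B : BForm}
    (hb : BForm.box i B ∉ Γ) : BForm.dia i B.neg ∈ Γ := by
  apply (diaMemIff h i B.neg).2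
  intro hc
  exact hb (h.mpMem (h.thmMem (boxMono i (dne B))) hc)

/-- existence lemma -/
theorem existDia {Γ : Set BForm} (h : MCS LLAx Γ) {i : Fin 2} {B : BForm}
    (hd : BForm.dia i B ∈ Γ) :
    ∃ Δ : Set BForm, MCS LLAx Δ ∧ CRel i Γ Δ ∧ B ∈ Δ := by
  have hnb : BForm.box i B.neg ∉ Γ := (diaMemIff h i B).1 hd
  have hcon : Con LLAx (insert B (bcont i Γ)) := by
    intro hc
    have hder : SDer LLAx (bcont i Γ) B.neg := negOfIncon (fun hcc => hcc hc)
    obtain ⟨l, hl, hp⟩ := hder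
    have hboxed : BProv LLAx (lImp (l.map (BForm.box i)) (BForm.box i B.neg)) :=
      (lImpBox i l B.neg).mp (BProv.nec i hp)
    have : SDer LLAx Γ (BForm.box i B.neg) := by
      refine ⟨l.map (BForm.box i), ?_, hboxed⟩
      intro X hX
      obtain ⟨C, hC, rfl⟩ := List.mem_map.1 hX
      exact hl C hC
    exact hnb (h.memOfSDer this)
  obtain ⟨Δ, hsub, hΔ⟩ := lindenbaum hcon
  refine ⟨Δ, hΔ, ?_, hsub (Set.mem_insert _ _)⟩
  intro C hC
  exact hsub (Set.mem_insert_of_mem _ hC)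

def Qprop (Δ : Set BForm) : Prop := ∀ B : BForm, GB B ∈ Δ

/-- existence of a Q-successor -/
theorem existQ {Γ : Set BForm} (h : MCS LLAx Γ) :
    ∃ Δ : Set BForm, MCS LLAx Δ ∧ CRel 0 Γ Δ ∧ Qprop Δ := by
  have hcon : Con LLAx (bcont 0 Γ ∪ Set.range GB) := by
    rintro ⟨l, hl, hp⟩
    obtain ⟨l2, hl2, hd⟩ := splitDer (bcont 0 Γ) (Set.range GB) l BForm.bot hl hp
    obtain ⟨bs, rfl⟩ : ∃ bs : List BForm, l2 = bs.map GB := by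
      clear hd
      induction l2 with
      | nil => exact ⟨[], rfl⟩
      | cons A t ih =>
          obtain ⟨bs, rfl⟩ := ih (fun X hX => hl2 X (List.mem_cons_of_mem A hX))
          obtain ⟨B, rfl⟩ := hl2 A (List.mem_cons_self)
          exact ⟨B :: bs, rfl⟩
    have hd2 : SDer LLAx (bcont 0 Γ) ((bigAnd (bs.map GB)).neg) :=
      hd.liftThm (lImpBigAnd (bs.map GB) BForm.bot)
    obtain ⟨l1, hl1, hp1⟩ := hd2
    have hboxed : BProv LLAx
        (lImp (l1.map (BForm.box 0)) (BForm.box 0 ((bigAnd (bs.map GB)).neg))) :=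
      (lImpBox 0 l1 _).mp (BProv.nec 0 hp1)
    have hsd : SDer LLAx Γ (BForm.box 0 ((bigAnd (bs.map GB)).neg)) := by
      refine ⟨l1.map (BForm.box 0), ?_, hboxed⟩
      intro X hX
      obtain ⟨C, hC, rfl⟩ := List.mem_map.1 hX
      exact hl1 C hC
    exact h.1 ((SDer.ofThm (mgen bs)).mp hsd)
  obtain ⟨Δ, hsub, hΔ⟩ := lindenbaum hcon
  refine ⟨Δ, hΔ, ?_, ?_⟩
  · intro C hC
    exact hsub (Or.inl hC)
  · intro B
    exact hsub (Or.inr ⟨B, rfl⟩)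

theorem qDiaBox {Δ : Set BForm} (h : MCS LLAx Δ) (hq : Qprop Δ) {B : BForm}
    (hd : BForm.dia 0 B ∈ Δ) : BForm.box 0 B ∈ Δ :=
  h.mpMem (h.mpMem (h.thmMem (axT 1 _)) (hq B)) hd

theorem qPres {Δ Θ : Set BForm} (h : MCS LLAx Δ) (hq : Qprop Δ)
    (hr : CRel 1 Δ Θ) : Qprop Θ := fun B =>
  hr _ (h.mpMem (h.thmMem (axFour 1 _)) (hq B))

theorem qBoxIff {Δ : Set BForm} (h : MCS LLAx Δ) (hq : Qprop Δ) (B : BForm) :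
    BForm.box 0 B ∈ Δ ↔ B ∈ Δ := by
  constructor
  · intro hb; exact h.mpMem (h.thmMem (axT 0 B)) hb
  · intro hb; exact qDiaBox h hq (h.mpMem (h.thmMem (diaT 0 B)) hb)


/- ===== enumeration of formulas ===== -/

theorem encodeB_inj : Function.Injective encodeB := by
  intro a
  induction a with
  | var n =>
      intro b h
      cases b <;> simp [encodeB, Nat.pair_eq_pair] at h
      rw [h]
  | bot =>
      intro b h
      cases b <;> simp [encodeB, Nat.pair_eq_pair] at h
      rfl
  | imp A B ihA ihB =>
      intro b h
      cases b <;> simp [encodeB, Nat.pair_eq_pair] at h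
      rw [ihA h.1, ihB h.2]
  | box i A ihA =>
      intro b h
      cases b <;> simp [encodeB, Nat.pair_eq_pair] at h
      rw [ihA h.2, Fin.val_inj.1 h.1]

/-- enumeration of formulas with arbitrarily large indices -/
noncomputable def EB (n : ℕ) : BForm := Function.invFun encodeB (Nat.unpair n).2

theorem EB_ge (B : BForm) (k : ℕ) : ∃ n, k ≤ n ∧ EB n = B := by
  refine ⟨Nat.pair k (encodeB B), Nat.left_le_pair k _, ?_⟩
  simp only [EB, Nat.unpair_pair]
  exact Function.leftInverse_invFun encodeB_inj B

/- ===== witness choice functions ===== -/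

open Classical in
noncomputable def witD (i : Fin 2) (Γ : Set BForm) (B : BForm) : Set BForm :=
  if h : MCS LLAx Γ ∧ BForm.dia i B ∈ Γ then (existDia h.1 h.2).choose else Γ

theorem witD_mcs {Γ : Set BForm} (h : MCS LLAx Γ) (i : Fin 2) (B : BForm) :
    MCS LLAx (witD i Γ B) := by
  unfold witD
  split
  · next hcond => exact (existDia hcond.1 hcond.2).choose_spec.1
  · exact h

theorem witD_crel {Γ : Set BForm} (h : MCS LLAx Γ) (i : Fin 2) (B : BForm) :
    CRel i Γ (witD i Γ B) := by
  unfold witD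
  split
  · next hcond => exact (existDia hcond.1 hcond.2).choose_spec.2.1
  · exact crelRefl h i

theorem witD_mem {Γ : Set BForm} (h : MCS LLAx Γ) {i : Fin 2} {B : BForm}
    (hd : BForm.dia i B ∈ Γ) : B ∈ witD i Γ B := by
  unfold witD
  rw [dif_pos ⟨h, hd⟩]
  exact (existDia h hd).choose_spec.2.2

open Classical in
noncomputable def witQf (Γ : Set BForm) : Set BForm :=
  if h : MCS LLAx Γ then (existQ h).choose else Γ

theorem witQf_spec {Γ : Set BForm} (h : MCS LLAx Γ) :
    MCS LLAx (witQf Γ) ∧ CRel 0 Γ (witQf Γ) ∧ Qprop (witQf Γ) := by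
  unfold witQf
  rw [dif_pos h]
  exact (existQ h).choose_spec

/- ===== the labelling of the tree ===== -/

def aOne : Letter := (false, 0)
def aTwo : Letter := (false, 1)
def bOne : Letter := (true, 0)
def bTwo : Letter := (true, 1)

/-- count of leading occurrences of `x` -/
def cnt (x : Letter) : T22 → ℕ
  | [] => 0
  | l :: t => if l = x then cnt x t + 1 else 0

def cnt1 : T2W → ℕ
  | [] => 0
  | j :: t => if j = 1 then cnt1 t + 1 else 0

variable (Γ0 : Set BForm)

/-- labels of the root layer; the word is in REVERSED order -/
noncomputable def H0 : T22 → Set BForm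
  | [] => Γ0
  | l :: t =>
      if l = aOne then witD 0 (H0 t) (EB (cnt aTwo t))
      else if l = bOne then witD 1 (H0 t) (EB (cnt bTwo t))
      else H0 t

/-- labels of the upper layer; both words in REVERSED order -/
noncomputable def H1 (w : T22) : T2W → Set BForm
  | [] => witQf (H0 Γ0 w)
  | j :: t => if j = 0 then witD 1 (H1 w t) (EB (cnt1 t)) else H1 w t

/-- the labelling map -/
noncomputable def hmap : W222 → Set BForm := fun x =>
  match x.2 with
  | none => H0 Γ0 x.1.reverse
  | some b => H1 Γ0 x.1.reverse b.reverse

variable {Γ0}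

theorem H0_mcs (h : MCS LLAx Γ0) : ∀ r : T22, MCS LLAx (H0 Γ0 r) := by
  intro r
  induction r with
  | nil => exact h
  | cons l t ih =>
      unfold H0
      split
      · exact witD_mcs ih 0 _
      · split
        · exact witD_mcs ih 1 _
        · exact ih

theorem H1_mcs (h : MCS LLAx Γ0) (w : T22) : ∀ b : T2W, MCS LLAx (H1 Γ0 w b) := by
  intro b
  induction b with
  | nil => exact (witQf_spec (H0_mcs h w)).1
  | cons j t ih =>
      unfold H1
      split
      · exact witD_mcs ih 1 _
      · exact ih

theorem H1_q (h : MCS LLAx Γ0) (w : T22) : ∀ b : T2W, Qprop (H1 Γ0 w b) := by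
  intro b
  induction b with
  | nil => exact (witQf_spec (H0_mcs h w)).2.2
  | cons j t ih =>
      unfold H1
      split
      · exact qPres (H1_mcs h w t) ih (witD_crel (H1_mcs h w t) 1 _)
      · exact ih


/- ===== semantic lemmas ===== -/

theorem BSat_subst {W : Type} (R : Fin 2 → W → W → Prop) (V : ℕ → W → Prop)
    (σ : ℕ → BForm) : ∀ (A : BForm) (x : W),
    BSat R V x (A.subst σ) ↔ BSat R (fun n y => BSat R V y (σ n)) x A := by
  intro A
  induction A with
  | var n => intro x; simp [BForm.subst, BSat]
  | bot => intro x; simp [BForm.subst, BSat]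
  | imp A B ihA ihB => intro x; simp [BForm.subst, BSat, ihA, ihB]
  | box i A ihA => intro x; simp [BForm.subst, BSat, ihA]

theorem MKSat_subst {W : Type} (R : W → W → Prop) (V : ℕ → W → Prop)
    (σ : ℕ → MForm) : ∀ (A : MForm) (x : W),
    MKSat R V x (A.subst σ) ↔ MKSat R (fun n y => MKSat R V y (σ n)) x A := by
  intro A
  induction A with
  | var n => intro x; simp [MForm.subst, MKSat]
  | bot => intro x; simp [MForm.subst, MKSat]
  | imp A B ihA ihB => intro x; simp [MForm.subst, MKSat, ihA, ihB]
  | box A ihA => intro x; simp [MForm.subst, MKSat, ihA]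

theorem toB_sat {W : Type} (R : Fin 2 → W → W → Prop) (V : ℕ → W → Prop)
    (i : Fin 2) : ∀ (A : MForm) (x : W),
    BSat R V x (A.toB i) ↔ MKSat (R i) V x A := by
  intro A
  induction A with
  | var n => intro x; simp [MForm.toB, BSat, MKSat]
  | bot => intro x; simp [MForm.toB, BSat, MKSat]
  | imp A B ihA ihB => intro x; simp [MForm.toB, BSat, MKSat, ihA, ihB]
  | box A ihA => intro x; simp [MForm.toB, BSat, MKSat, ihA]

/-- soundness of the unimodal Hilbert system -/
theorem msound {W : Type} (R : W → W → Prop) {Ax : Set MForm}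
    (hAx : ∀ B ∈ Ax, MKValid R B) {A : MForm} (h : MProv Ax A) : MKValid R A := by
  induction h with
  | axm hmem => exact hAx _ hmem
  | pl1 => intro V x; exact fun ha _ => ha
  | pl2 => intro V x; exact fun h1 h2 h3 => h1 h3 (h2 h3)
  | pl3 =>
      intro V x
      exact fun h1 => Classical.byContradiction (fun hn => h1 hn)
  | kax => intro V x; exact fun h1 h2 y hy => h1 y hy (h2 y hy)
  | mp _ _ ih1 ih2 => intro V x; exact ih1 V x (ih2 V x)
  | nec _ ih => intro V x; exact fun y _ => ih V y
  | subst σ _ ih =>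
      intro V x
      exact (MKSat_subst R V σ _ x).2 (ih _ x)

/-- soundness of the bimodal Hilbert system -/
theorem bsound {W : Type} (R : Fin 2 → W → W → Prop) {Ax : Set BForm}
    (hAx : ∀ B ∈ Ax, BValid R B) {A : BForm} (h : BProv Ax A) : BValid R A := by
  induction h with
  | axm hmem => exact hAx _ hmem
  | pl1 => intro V x; exact fun ha _ => ha
  | pl2 => intro V x; exact fun h1 h2 h3 => h1 h3 (h2 h3)
  | pl3 =>
      intro V x
      exact fun h1 => Classical.byContradiction (fun hn => h1 hn)
  | kax i => intro V x; exact fun h1 h2 y hy => h1 y hy (h2 y hy)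
  | mp _ _ ih1 ih2 => intro V x; exact ih1 V x (ih2 V x)
  | nec i _ ih => intro V x; exact fun y _ => ih V y
  | subst σ _ ih =>
      intro V x
      exact (BSat_subst R V σ _ x).2 (ih _ x)

/- ===== frame properties of 𝕋₂,₂₊₂ ===== -/

theorem R1'_refl : Reflexive R1' := fun _ => Relation.ReflTransGen.refl

theorem R1'_trans : Transitive R1' := fun _ _ _ h1 h2 => h1.trans h2

theorem R2'_refl : Reflexive R2' := fun _ => Relation.ReflTransGen.refl

theorem R2'_trans : Transitive R2' := fun _ _ _ h1 h2 => h1.trans h2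

/-- points of the upper layer are R₁′-final -/
theorem R1'_final {a : T22} {b : T2W} {z : W222} (h : R1' (a, some b) z) :
    z = (a, some b) := by
  induction h with
  | refl => rfl
  | tail hxy hgen ih =>
      rcases hgen with ⟨a', a'', _, heq, _⟩ | ⟨a', heq, _⟩ <;>
        · rw [ih] at heq; exact absurd heq (by simp)

/-- R₂′-successors of an upper-layer point stay in the same column -/
theorem R2'_shape {a : T22} {b : T2W} {z : W222} (h : R2' (a, some b) z) :
    ∃ b' : T2W, z = (a, some b') := by
  induction h with
  | refl => exact ⟨b, rfl⟩
  | tail hxy hgen ih =>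
      obtain ⟨b'', rfl⟩ := ih
      rcases hgen with ⟨a', a'', _, heq, _⟩ | ⟨a', b1, b2, hpre, heq, heq2⟩
      · exact absurd heq (by simp)
      · simp only [Prod.mk.injEq] at heq
        obtain ⟨h1, h2⟩ := heq
        subst h1
        exact ⟨b2, heq2⟩

/-- every point sees an R₁′-endpoint -/
theorem R1'_endpoint (x : W222) :
    ∃ y : W222, R1' x y ∧ ∀ z, R1' y z → z = y := by
  obtain ⟨a, b⟩ := x
  cases b with
  | none =>
      refine ⟨(a, some []), Relation.ReflTransGen.single (Or.inr ⟨a, rfl, rfl⟩), ?_⟩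
      intro z hz; exact R1'_final hz
  | some b =>
      exact ⟨(a, some b), Relation.ReflTransGen.refl, fun z hz => R1'_final hz⟩


/- ===== validity of the axioms on 𝕋₂,₂₊₂ ===== -/

theorem RRzero : (![R1', R2'] : Fin 2 → W222 → W222 → Prop) 0 = R1' := rfl

theorem RRone : (![R1', R2'] : Fin 2 → W222 → W222 → Prop) 1 = R2' := rfl

theorem s4_valid {W : Type} (R : W → W → Prop) (hrefl : Reflexive R)
    (htrans : Transitive R) : ∀ B ∈ S4Ax, MKValid R B := by
  intro B hB
  rcases hB with rfl | rfl
  · intro V x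
    exact fun hb => hb x (hrefl x)
  · intro V x
    exact fun hb y hy z hz => hb z (htrans hy hz)

theorem mck_valid {W : Type} (R : W → W → Prop)
    (hend : ∀ x, ∃ y, R x y ∧ ∀ z, R y z → z = y) : MKValid R McKM := by
  intro V x
  show MKSat R V x ((MForm.box pM.dia).imp (MForm.box pM).dia)
  intro hb
  obtain ⟨y, hxy, hy⟩ := hend x
  have hdy : MKSat R V y pM.dia := hb y hxy
  have hvy : V 0 y := by
    by_contra hv
    apply hdy
    intro u hu
    rw [hy u hu]
    exact fun h => hv h
  intro hall
  apply hall y hxy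
  intro u hu
  rw [hy u hu]
  exact hvy

theorem s41_valid {W : Type} (R : W → W → Prop) (hrefl : Reflexive R)
    (htrans : Transitive R) (hend : ∀ x, ∃ y, R x y ∧ ∀ z, R y z → z = y) :
    ∀ B ∈ S4Ax ∪ {McKM}, MKValid R B := by
  intro B hB
  rcases hB with hB | rfl
  · exact s4_valid R hrefl htrans B hB
  · exact mck_valid R hend

theorem mkb_valid : BValid ![R1', R2'] MKB := by
  intro V x
  show BSat _ V x ((BForm.box 0 (BForm.box 1 ((BForm.dia 0 pB).imp (BForm.box 0 pB))).neg).neg)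
  intro hall
  obtain ⟨a, b⟩ := x
  -- pick an upper-layer successor
  have key : ∀ (a' : T22) (b' : T2W), R1' (a, b) (a', some b') →
      BSat ![R1', R2'] V (a', some b')
        ((BForm.box 1 ((BForm.dia 0 pB).imp (BForm.box 0 pB))).neg) → False := by
    intro a' b' hr hneg
    apply hneg
    intro z hz
    rw [RRone] at hz
    obtain ⟨b'', rfl⟩ := R2'_shape hz
    intro hdia
    have hv : V 0 (a', some b'') := by
      by_contra hv
      apply hdia
      intro u hu
      rw [RRzero] at hu
      rw [R1'_final hu]
      exact fun h => hv h
    intro u hu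
    rw [RRzero] at hu
    rw [R1'_final hu]
    exact hv
  cases b with
  | none =>
      have hr : R1' (a, none) (a, some ([] : T2W)) :=
        Relation.ReflTransGen.single (Or.inr ⟨a, rfl, rfl⟩)
      exact key a [] hr (hall (a, some []) hr)
  | some b =>
      exact key a b Relation.ReflTransGen.refl
        (hall (a, some b) Relation.ReflTransGen.refl)

theorem R1'_ends : ∀ x : W222, ∃ y, R1' x y ∧ ∀ z, R1' y z → z = y := R1'_endpoint

theorem LLAx_valid : ∀ B ∈ LLAx, BValid ![R1', R2'] B := by
  intro B hB
  rcases hB with (⟨A, hA, rfl⟩ | ⟨A, hA, rfl⟩) | rfl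
  · intro V x
    rw [toB_sat, RRzero]
    exact msound R1' (s41_valid R1' R1'_refl R1'_trans R1'_ends) hA V x
  · intro V x
    rw [toB_sat, RRone]
    exact msound R2' (s4_valid R2' R2'_refl R2'_trans) hA V x
  · exact mkb_valid

/-- soundness: L is valid in 𝕋₂,₂₊₂ -/
theorem soundLL {A : BForm} (h : A ∈ LL) : BValid ![R1', R2'] A :=
  bsound _ LLAx_valid h


/- ===== structural lemmas for the labelling ===== -/

section Tree

variable {Γ0 : Set BForm}

theorem letterA (l : Letter) (hl : l.1 = false) : l = aOne ∨ l = aTwo := by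
  obtain ⟨b, j⟩ := l
  simp only at hl
  subst hl
  fin_cases j
  · exact Or.inl rfl
  · exact Or.inr rfl

theorem letterB (l : Letter) (hl : l.1 = true) : l = bOne ∨ l = bTwo := by
  obtain ⟨b, j⟩ := l
  simp only at hl
  subst hl
  fin_cases j
  · exact Or.inl rfl
  · exact Or.inr rfl

theorem H0_aOne (t : T22) : H0 Γ0 (aOne :: t) = witD 0 (H0 Γ0 t) (EB (cnt aTwo t)) := by
  simp [H0]

theorem H0_aTwo (t : T22) : H0 Γ0 (aTwo :: t) = H0 Γ0 t := by
  simp [H0, aOne, aTwo, bOne]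

theorem H0_bOne (t : T22) : H0 Γ0 (bOne :: t) = witD 1 (H0 Γ0 t) (EB (cnt bTwo t)) := by
  simp [H0, aOne, bOne]

theorem H0_bTwo (t : T22) : H0 Γ0 (bTwo :: t) = H0 Γ0 t := by
  simp [H0, aOne, bOne, bTwo]

theorem H1_zero (w : T22) (t : T2W) :
    H1 Γ0 w ((0 : Fin 2) :: t) = witD 1 (H1 Γ0 w t) (EB (cnt1 t)) := by
  simp [H1]

theorem H1_one (w : T22) (t : T2W) : H1 Γ0 w ((1 : Fin 2) :: t) = H1 Γ0 w t := by
  simp [H1]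

variable (h : MCS LLAx Γ0)
include h

theorem H0_stepA (t : T22) {l : Letter} (hl : l.1 = false) :
    CRel 0 (H0 Γ0 t) (H0 Γ0 (l :: t)) := by
  rcases letterA l hl with rfl | rfl
  · rw [H0_aOne]; exact witD_crel (H0_mcs h t) 0 _
  · rw [H0_aTwo]; exact crelRefl (H0_mcs h t) 0

theorem H0_stepB (t : T22) {l : Letter} (hl : l.1 = true) :
    CRel 1 (H0 Γ0 t) (H0 Γ0 (l :: t)) := by
  rcases letterB l hl with rfl | rfl
  · rw [H0_bOne]; exact witD_crel (H0_mcs h t) 1 _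
  · rw [H0_bTwo]; exact crelRefl (H0_mcs h t) 1

theorem H0_wordsA : ∀ (c t : T22), (∀ l ∈ c, l.1 = false) →
    CRel 0 (H0 Γ0 t) (H0 Γ0 (c ++ t)) := by
  intro c
  induction c with
  | nil => intro t _; exact crelRefl (H0_mcs h t) 0
  | cons l c' ih =>
      intro t hc
      have h1 := ih t (fun x hx => hc x (List.mem_cons_of_mem l hx))
      have h2 : CRel 0 (H0 Γ0 (c' ++ t)) (H0 Γ0 (l :: (c' ++ t))) :=
        H0_stepA h _ (hc l (List.mem_cons_self))
      exact crelTrans (H0_mcs h t) 0 h1 h2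

theorem H0_wordsB : ∀ (c t : T22), (∀ l ∈ c, l.1 = true) →
    CRel 1 (H0 Γ0 t) (H0 Γ0 (c ++ t)) := by
  intro c
  induction c with
  | nil => intro t _; exact crelRefl (H0_mcs h t) 1
  | cons l c' ih =>
      intro t hc
      have h1 := ih t (fun x hx => hc x (List.mem_cons_of_mem l hx))
      have h2 : CRel 1 (H0 Γ0 (c' ++ t)) (H0 Γ0 (l :: (c' ++ t))) :=
        H0_stepB h _ (hc l (List.mem_cons_self))
      exact crelTrans (H0_mcs h t) 1 h1 h2

theorem H1_step (w : T22) (t : T2W) (j : Fin 2) :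
    CRel 1 (H1 Γ0 w t) (H1 Γ0 w (j :: t)) := by
  by_cases hj : j = 0
  · subst hj; rw [H1_zero]; exact witD_crel (H1_mcs h w t) 1 _
  · rw [(by fin_cases j <;> simp_all : j = 1), H1_one]; exact crelRefl (H1_mcs h w t) 1

theorem H1_words (w : T22) : ∀ (d t : T2W), CRel 1 (H1 Γ0 w t) (H1 Γ0 w (d ++ t)) := by
  intro d
  induction d with
  | nil => intro t; exact crelRefl (H1_mcs h w t) 1
  | cons j d' ih =>
      intro t
      exact crelTrans (H1_mcs h w t) 1 (ih t) (H1_step h w (d' ++ t) j)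

omit h

theorem H0_copyA : ∀ (m : ℕ) (t : T22), H0 Γ0 (List.replicate m aTwo ++ t) = H0 Γ0 t := by
  intro m
  induction m with
  | zero => intro t; rfl
  | succ m ih =>
      intro t
      rw [List.replicate_succ, List.cons_append, H0_aTwo, ih]

theorem H0_copyB : ∀ (m : ℕ) (t : T22), H0 Γ0 (List.replicate m bTwo ++ t) = H0 Γ0 t := by
  intro m
  induction m with
  | zero => intro t; rfl
  | succ m ih =>
      intro t
      rw [List.replicate_succ, List.cons_append, H0_bTwo, ih]

theorem H1_copy (w : T22) : ∀ (m : ℕ) (t : T2W),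
    H1 Γ0 w (List.replicate m (1 : Fin 2) ++ t) = H1 Γ0 w t := by
  intro m
  induction m with
  | zero => intro t; rfl
  | succ m ih =>
      intro t
      rw [List.replicate_succ, List.cons_append, H1_one, ih]

theorem cnt_rep (x : Letter) : ∀ (m : ℕ) (t : T22),
    cnt x (List.replicate m x ++ t) = m + cnt x t := by
  intro m
  induction m with
  | zero => intro t; simp
  | succ m ih =>
      intro t
      rw [List.replicate_succ, List.cons_append]
      show (if x = x then cnt x (List.replicate m x ++ t) + 1 else 0) = _
      rw [if_pos rfl, ih]
      omega

theorem cnt1_rep : ∀ (m : ℕ) (t : T2W),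
    cnt1 (List.replicate m (1 : Fin 2) ++ t) = m + cnt1 t := by
  intro m
  induction m with
  | zero => intro t; simp
  | succ m ih =>
      intro t
      rw [List.replicate_succ, List.cons_append]
      show (if (1 : Fin 2) = 1 then cnt1 (List.replicate m 1 ++ t) + 1 else 0) = _
      rw [if_pos rfl, ih]
      omega

include h

/- ===== back lemmas ===== -/

theorem back0 (t : T22) (B : BForm) (hd : BForm.dia 0 B ∈ H0 Γ0 t) :
    ∃ m, B ∈ H0 Γ0 (aOne :: (List.replicate m aTwo ++ t)) := by
  obtain ⟨n, hn, hEB⟩ := EB_ge B (cnt aTwo t)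
  refine ⟨n - cnt aTwo t, ?_⟩
  rw [H0_aOne, H0_copyA, cnt_rep, Nat.sub_add_cancel hn, hEB]
  exact witD_mem (H0_mcs h t) hd

theorem back0b (t : T22) (B : BForm) (hd : BForm.dia 1 B ∈ H0 Γ0 t) :
    ∃ m, B ∈ H0 Γ0 (bOne :: (List.replicate m bTwo ++ t)) := by
  obtain ⟨n, hn, hEB⟩ := EB_ge B (cnt bTwo t)
  refine ⟨n - cnt bTwo t, ?_⟩
  rw [H0_bOne, H0_copyB, cnt_rep, Nat.sub_add_cancel hn, hEB]
  exact witD_mem (H0_mcs h t) hd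

theorem back1 (w : T22) (t : T2W) (B : BForm) (hd : BForm.dia 1 B ∈ H1 Γ0 w t) :
    ∃ m, B ∈ H1 Γ0 w ((0 : Fin 2) :: (List.replicate m (1 : Fin 2) ++ t)) := by
  obtain ⟨n, hn, hEB⟩ := EB_ge B (cnt1 t)
  refine ⟨n - cnt1 t, ?_⟩
  rw [H1_zero, H1_copy, cnt1_rep, Nat.sub_add_cancel hn, hEB]
  exact witD_mem (H1_mcs h w t) hd

/- ===== the labelling as a quasi-p-morphism ===== -/

theorem hmap_mcs : ∀ x : W222, MCS LLAx (hmap Γ0 x) := by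
  intro ⟨w, ob⟩
  cases ob with
  | none => exact H0_mcs h w.reverse
  | some b => exact H1_mcs h w.reverse b.reverse

theorem hmap_q (w : T22) (b : T2W) : Qprop (hmap Γ0 (w, some b)) :=
  H1_q h w.reverse b.reverse

theorem forth0 {x y : W222} (hr : R1' x y) : CRel 0 (hmap Γ0 x) (hmap Γ0 y) := by
  induction hr with
  | refl => exact crelRefl (hmap_mcs h x) 0
  | tail hxy hgen ih =>
      refine crelTrans (hmap_mcs h x) 0 ih ?_
      rcases hgen with ⟨a, a', ⟨c, hcall, rfl⟩, rfl, rfl⟩ | ⟨a, rfl, rfl⟩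
      · show CRel 0 (H0 Γ0 a.reverse) (H0 Γ0 (a ++ c).reverse)
        rw [List.reverse_append]
        exact H0_wordsA h c.reverse a.reverse (fun l hl => hcall l (List.mem_reverse.1 hl))
      · exact (witQf_spec (H0_mcs h a.reverse)).2.1

theorem forth1 {x y : W222} (hr : R2' x y) : CRel 1 (hmap Γ0 x) (hmap Γ0 y) := by
  induction hr with
  | refl => exact crelRefl (hmap_mcs h x) 1
  | tail hxy hgen ih =>
      refine crelTrans (hmap_mcs h x) 1 ih ?_
      rcases hgen with ⟨a, a', ⟨c, hcall, rfl⟩, rfl, rfl⟩ | ⟨a, b, b', ⟨d, rfl⟩, rfl, rfl⟩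
      · show CRel 1 (H0 Γ0 a.reverse) (H0 Γ0 (a ++ c).reverse)
        rw [List.reverse_append]
        exact H0_wordsB h c.reverse a.reverse (fun l hl => hcall l (List.mem_reverse.1 hl))
      · show CRel 1 (H1 Γ0 a.reverse b.reverse) (H1 Γ0 a.reverse (b ++ d).reverse)
        rw [List.reverse_append]
        exact H1_words h a.reverse d.reverse b.reverse

theorem backAll : ∀ (x : W222) (i : Fin 2) (B : BForm), BForm.dia i B ∈ hmap Γ0 x →
    ∃ y, (![R1', R2'] : Fin 2 → W222 → W222 → Prop) i x y ∧ B ∈ hmap Γ0 y := by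
  intro ⟨w, ob⟩ i B hd
  cases ob with
  | none =>
      fin_cases i
      · obtain ⟨m, hm⟩ := back0 h w.reverse B hd
        refine ⟨((aOne :: (List.replicate m aTwo ++ w.reverse)).reverse, none), ?_, ?_⟩
        · show R1' (w, none) _
          apply Relation.ReflTransGen.single
          left
          refine ⟨w, _, ⟨List.replicate m aTwo ++ [aOne], ?_, ?_⟩, rfl, rfl⟩
          · intro l hl
            rcases List.mem_append.1 hl with h1 | h1
            · rw [List.eq_of_mem_replicate h1]; rfl
            · rw [List.mem_singleton.1 h1]; rfl
          · simp [List.reverse_cons, List.reverse_append, List.append_assoc]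
        · show B ∈ H0 Γ0 _
          rw [List.reverse_reverse]
          exact hm
      · obtain ⟨m, hm⟩ := back0b h w.reverse B hd
        refine ⟨((bOne :: (List.replicate m bTwo ++ w.reverse)).reverse, none), ?_, ?_⟩
        · show R2' (w, none) _
          apply Relation.ReflTransGen.single
          left
          refine ⟨w, _, ⟨List.replicate m bTwo ++ [bOne], ?_, ?_⟩, rfl, rfl⟩
          · intro l hl
            rcases List.mem_append.1 hl with h1 | h1
            · rw [List.eq_of_mem_replicate h1]; rfl
            · rw [List.mem_singleton.1 h1]; rfl
          · simp [List.reverse_cons, List.reverse_append, List.append_assoc]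
        · show B ∈ H0 Γ0 _
          rw [List.reverse_reverse]
          exact hm
  | some b =>
      fin_cases i
      · refine ⟨(w, some b), Relation.ReflTransGen.refl, ?_⟩
        have hbox : BForm.box 0 B ∈ hmap Γ0 (w, some b) :=
          qDiaBox (hmap_mcs h _) (hmap_q h w b) hd
        exact (qBoxIff (hmap_mcs h _) (hmap_q h w b) B).1 hbox
      · obtain ⟨m, hm⟩ := back1 h w.reverse b.reverse B hd
        refine ⟨(w, some (((0 : Fin 2) :: (List.replicate m (1 : Fin 2) ++ b.reverse)).reverse)),
          ?_, ?_⟩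
        · show R2' (w, some b) _
          apply Relation.ReflTransGen.single
          right
          refine ⟨w, b, _, ⟨(List.replicate m (1 : Fin 2)).reverse ++ [(0 : Fin 2)], ?_⟩, rfl, rfl⟩
          simp [List.reverse_cons, List.reverse_append, List.append_assoc]
        · show B ∈ H1 Γ0 w.reverse _
          rw [List.reverse_reverse]
          exact hm

/- ===== the truth lemma ===== -/

theorem truth : ∀ (A : BForm) (x : W222),
    BSat ![R1', R2'] (fun n y => BForm.var n ∈ hmap Γ0 y) x A ↔ A ∈ hmap Γ0 x := by
  intro A
  induction A with
  | var n => intro x; exact Iff.rfl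
  | bot => intro x; exact iff_of_false id (hmap_mcs h x).botNotMem
  | imp A B ihA ihB =>
      intro x
      constructor
      · intro hs
        exact ((hmap_mcs h x).impMem).2 (fun ha => (ihB x).1 (hs ((ihA x).2 ha)))
      · intro hm ha
        exact (ihB x).2 ((hmap_mcs h x).mpMem hm ((ihA x).1 ha))
  | box i A ih =>
      intro x
      constructor
      · intro hs
        by_contra hnb
        have hdia : BForm.dia i A.neg ∈ hmap Γ0 x := notBoxDia (hmap_mcs h x) hnb
        obtain ⟨y, hry, hmem⟩ := backAll h x i A.neg hdia
        have hA : A ∉ hmap Γ0 y := ((hmap_mcs h y).notMem).1 hmem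
        exact hA ((ih y).1 (hs y hry))
      · intro hm y hry
        apply (ih y).2
        have hcrel : CRel i (hmap Γ0 x) (hmap Γ0 y) := by
          fin_cases i
          · exact forth0 h hry
          · exact forth1 h hry
        exact hcrel A hm

end Tree

theorem SDer_empty {Ax : Set BForm} {C : BForm} (h : SDer Ax ∅ C) : BProv Ax C := by
  obtain ⟨l, hl, hp⟩ := h
  cases l with
  | nil => exact hp
  | cons A t => exact absurd (hl A (List.mem_cons_self)) (Set.notMem_empty A)

end BP


/-- the logic of the frame 𝕋₂,₂₊₂ equals
L = S4.1 ∗ S4 + ◇₁□₂(◇₁p → □₁p). -/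
theorem log_T222_eq_LL :
    {A : BForm | BValid ![R1', R2'] A} = LL := by
  ext A
  simp only [Set.mem_setOf_eq]
  constructor
  · intro hval
    by_contra hnA
    have hnA' : ¬ BProv BP.LLAx A := hnA
    have hcon : BP.Con BP.LLAx (insert A.neg ∅) := by
      intro hder
      have h2 : BP.SDer BP.LLAx ∅ A.neg.neg := BP.deduction hder
      exact hnA' (BProv.mp BProv.pl3 (BP.SDer_empty h2))
    obtain ⟨Γ0, hsub, hΓ0⟩ := BP.lindenbaum hcon
    have hmemneg : A.neg ∈ Γ0 := hsub (Set.mem_insert _ _)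
    have hAnot : A ∉ BP.hmap Γ0 (([] : T22), (none : Option T2W)) := by
      show A ∉ BP.H0 Γ0 ([] : T22).reverse
      exact (hΓ0.notMem).1 hmemneg
    exact hAnot ((BP.truth hΓ0 A _).1
      (hval (fun n y => BForm.var n ∈ BP.hmap Γ0 y) (([] : T22), none)))
  · exact BP.soundLL
end
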